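/- arXiv:1709.07797 — 4 statements merged into one kernel-verified Lean document; each statement's English description precedes it below -/
import Mathlib

section
/- Let P ⊂ ℝ^d be finite. For every x ∈ ℝ^d, the minimum nearest-neighbor geodesic distance from x to P satisfies min_{p∈P} d_N(x,p) = 2·r_P(x)². Consequently, for every α ≥ 0, the sublevel sets satisfy {x ∈ ℝ^d : r_P(x) ≤ α} = {x ∈ ℝ^d : min_{p∈P} d_N(x,p) ≤ 2α²}. -/
open scoped BigOperators
open MeasureTheory

noncomputable section

set_option maxHeartbeats 1000000

/-- Points of `ℝ^d`. -/
abbrev Pt (d : ℕ) : Type := EuclideanSpace ℝ (Fin d)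

/-- The edge-squared metric on a point set `P ⊆ ℝ^d`: the infimum over finite chains of points
of `P` from `a` to `b` of the sum of squared Euclidean lengths of the steps. -/
noncomputable def edgeSq {d : ℕ} (P : Set (Pt d)) (a b : Pt d) : ℝ :=
  sInf {c : ℝ | ∃ (k : ℕ) (p : Fin (k + 1) → Pt d), p 0 = a ∧ p (Fin.last k) = b ∧
    (∀ i, p i ∈ P) ∧ c = ∑ i : Fin k, ‖p i.succ - p i.castSucc‖ ^ 2}

/-- A path `γ : [0,1] → ℝ^d` is piecewise-C¹ if it is continuous on `[0,1]` and there is a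
partition `0 = t₀ < t₁ < ⋯ < t_m = 1` such that `γ` is `C¹` on each subinterval. -/
def PiecewiseC1 {d : ℕ} (γ : ℝ → Pt d) : Prop :=
  ContinuousOn γ (Set.Icc 0 1) ∧
  ∃ (m : ℕ) (t : Fin (m + 1) → ℝ), StrictMono t ∧ t 0 = 0 ∧ t (Fin.last m) = 1 ∧
    ∀ i : Fin m, ContDiffOn ℝ 1 γ (Set.Icc (t i.castSucc) (t i.succ))

/-- The nearest-neighbor length of a path: `ℓ(γ) = ∫₀¹ r_P(γ(t)) ‖γ'(t)‖ dt`, where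
`r_P(z) = min_{x ∈ P} ‖x - z‖` is the distance to the nearest point of `P`. -/
noncomputable def nnLength {d : ℕ} (P : Set (Pt d)) (γ : ℝ → Pt d) : ℝ :=
  ∫ t in (0:ℝ)..1, Metric.infDist (γ t) P * ‖deriv γ t‖

/-- The nearest-neighbor geodesic distance:
`d_N(a,b) = 4 ⬝ inf { ℓ(γ) | γ piecewise-C¹ path from a to b }`. -/
noncomputable def nnGeo {d : ℕ} (P : Set (Pt d)) (a b : Pt d) : ℝ :=
  4 * sInf {l : ℝ | ∃ γ : ℝ → Pt d, PiecewiseC1 γ ∧ γ 0 = a ∧ γ 1 = b ∧ l = nnLength P γ}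

lemma piece_key {d : ℕ} (P : Set (Pt d)) {γ : ℝ → Pt d} {a b : ℝ} (hab : a < b)
    (hγ : ContDiffOn ℝ 1 γ (Set.Icc a b)) :
    IntervalIntegrable (fun t => Metric.infDist (γ t) P * ‖deriv γ t‖) volume a b ∧
    Metric.infDist (γ a) P ^ 2 - Metric.infDist (γ b) P ^ 2 ≤
      2 * ∫ t in a..b, Metric.infDist (γ t) P * ‖deriv γ t‖ := by
  set g : ℝ → ℝ := fun t => Metric.infDist (γ t) P with hgdef
  set γ' : ℝ → Pt d := derivWithin γ (Set.Icc a b) with hγ'def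
  have hu : UniqueDiffOn ℝ (Set.Icc a b) := uniqueDiffOn_Icc hab
  have hγc : ContinuousOn γ (Set.Icc a b) := hγ.continuousOn
  have hγ'c : ContinuousOn γ' (Set.Icc a b) := hγ.continuousOn_derivWithin hu le_rfl
  have hgc : ContinuousOn g (Set.Icc a b) :=
    (Metric.continuous_infDist_pt P).comp_continuousOn hγc
  have hgnn : ∀ t, 0 ≤ g t := fun t => Metric.infDist_nonneg
  have hd : ∀ t ∈ Set.Ioo a b, HasDerivAt γ (γ' t) t := by
    intro t ht
    have h1 : DifferentiableWithinAt ℝ γ (Set.Icc a b) t :=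
      (hγ.differentiableOn one_ne_zero) t (Set.Ioo_subset_Icc_self ht)
    exact h1.hasDerivWithinAt.hasDerivAt (Icc_mem_nhds ht.1 ht.2)
  have hderiv_eq : ∀ t ∈ Set.Ioo a b, deriv γ t = γ' t := fun t ht => (hd t ht).deriv
  obtain ⟨C₀, hC₀⟩ := isCompact_Icc.exists_bound_of_continuousOn hγ'c
  set C : ℝ := max C₀ 1 with hCdef
  have hCpos : (0:ℝ) < C := lt_of_lt_of_le one_pos (le_max_right _ _)
  have hCb : ∀ t ∈ Set.Icc a b, ‖γ' t‖ ≤ C := fun t ht => (hC₀ t ht).trans (le_max_left _ _)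
  set H : ℝ → ℝ := fun t => g t * ‖γ' t‖ with hHdef
  have hHc : ContinuousOn H (Set.Icc a b) := hgc.mul hγ'c.norm
  have hHint : ∀ u v, u ∈ Set.Icc a b → v ∈ Set.Icc a b → IntervalIntegrable H volume u v :=
    fun u v hu' hv' => (hHc.mono (Set.uIcc_subset_Icc hu' hv')).intervalIntegrable
  have hγ'int : ∀ u v, u ∈ Set.Icc a b → v ∈ Set.Icc a b → IntervalIntegrable γ' volume u v :=
    fun u v hu' hv' => (hγ'c.mono (Set.uIcc_subset_Icc hu' hv')).intervalIntegrable
  have hFTC : ∀ u v, u ∈ Set.Icc a b → v ∈ Set.Icc a b → u ≤ v →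
      (∫ t in u..v, γ' t) = γ v - γ u := by
    intro u v hu' hv' huv
    exact intervalIntegral.integral_eq_sub_of_hasDeriv_right_of_le huv
      (hγc.mono (Set.Icc_subset_Icc hu'.1 hv'.2))
      (fun t ht => (hd t ⟨lt_of_le_of_lt hu'.1 ht.1, lt_of_lt_of_le ht.2 hv'.2⟩).hasDerivWithinAt)
      (hγ'int u v hu' hv')
  have hLip : ∀ u v, u ∈ Set.Icc a b → v ∈ Set.Icc a b → u ≤ v →
      ‖γ v - γ u‖ ≤ C * (v - u) := by
    intro u v hu' hv' huv
    rw [← hFTC u v hu' hv' huv]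
    have h1 := intervalIntegral.norm_integral_le_of_norm_le_const (C := C) (f := γ')
      (a := u) (b := v) (fun t ht => by
        rw [Set.uIoc_of_le huv] at ht
        exact hCb t ⟨le_of_lt (lt_of_le_of_lt hu'.1 ht.1), le_trans ht.2 hv'.2⟩)
    rwa [abs_of_nonneg (sub_nonneg.2 huv)] at h1
  have hgLip : ∀ u v, u ∈ Set.Icc a b → v ∈ Set.Icc a b → |g v - g u| ≤ ‖γ v - γ u‖ := by
    intro u v _ _
    have h1 : g v ≤ g u + dist (γ v) (γ u) := Metric.infDist_le_infDist_add_dist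
    have h2 : g u ≤ g v + dist (γ u) (γ v) := Metric.infDist_le_infDist_add_dist
    rw [dist_eq_norm] at h1 h2
    rw [abs_sub_le_iff]
    constructor
    · linarith [h1]
    · rw [← norm_neg (γ v - γ u)]; simp only [neg_sub]; linarith [h2]

  have main : ∀ ε > (0:ℝ), g a ^ 2 - g b ^ 2 ≤ 2 * (∫ t in a..b, H t) + ε * (b - a) := by
    intro ε hε
    set F : ℝ → ℝ := fun v => ∫ t in a..v, H t with hFdef
    have hFc : ContinuousOn F (Set.Icc a b) := by
      have h1 : IntegrableOn H (Set.uIcc a b) volume := by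
        rw [Set.uIcc_of_le hab.le]; exact hHc.integrableOn_compact isCompact_Icc
      have h2 := intervalIntegral.continuousOn_primitive_interval h1
      rwa [Set.uIcc_of_le hab.le] at h2
    have hFadd : ∀ u v, u ∈ Set.Icc a b → v ∈ Set.Icc a b →
        F u + (∫ t in u..v, H t) = F v := fun u v hu' hv' =>
      intervalIntegral.integral_add_adjacent_intervals
        (hHint a u (Set.left_mem_Icc.2 hab.le) hu') (hHint u v hu' hv')
    set s : Set ℝ := {v | g a ^ 2 - g v ^ 2 ≤ 2 * F v + ε * (v - a)} with hsdef
    have hsub : Set.Icc a b ⊆ s := by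
      apply IsClosed.Icc_subset_of_forall_exists_gt
      · have hφ : ContinuousOn (fun v => g a ^ 2 - g v ^ 2 - (2 * F v + ε * (v - a)))
            (Set.Icc a b) := by
          apply ContinuousOn.sub
          · exact continuousOn_const.sub (hgc.pow 2)
          · exact (continuousOn_const.mul hFc).add
              (continuousOn_const.mul (continuousOn_id.sub continuousOn_const))
        have heq : s ∩ Set.Icc a b =
            Set.Icc a b ∩ (fun v => g a ^ 2 - g v ^ 2 - (2 * F v + ε * (v - a))) ⁻¹' Set.Iic 0 := by
          ext v
          simp only [hsdef, Set.mem_inter_iff, Set.mem_setOf_eq, Set.mem_preimage,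
            Set.mem_Iic, sub_nonpos, and_comm]
        rw [heq]
        exact hφ.preimage_isClosed_of_isClosed isClosed_Icc isClosed_Iic
      · show g a ^ 2 - g a ^ 2 ≤ 2 * F a + ε * (a - a)
        simp [hFdef, intervalIntegral.integral_same]
      · intro x hx y hy
        obtain ⟨hxs, hxa, hxb⟩ : x ∈ s ∧ a ≤ x ∧ x < b := ⟨hx.1, hx.2.1, hx.2.2⟩
        have hδpos : (0:ℝ) < ε / (2 * C ^ 2) := by positivity
        set w : ℝ := min y (min b (x + ε / (2 * C ^ 2))) with hwdef
        have hwx : x < w := lt_min hy (lt_min hxb (by linarith))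
        have hwb : w ≤ b := le_trans (min_le_right _ _) (min_le_left _ _)
        have hwy : w ≤ y := min_le_left _ _
        have hwδ : w - x ≤ ε / (2 * C ^ 2) := by
          have h1 : w ≤ x + ε / (2 * C ^ 2) :=
            le_trans (min_le_right y (min b (x + ε / (2 * C ^ 2))))
              (min_le_right b (x + ε / (2 * C ^ 2)))
          linarith
        have hxI : x ∈ Set.Icc a b := ⟨hxa, hxb.le⟩
        have hwI : w ∈ Set.Icc a b := ⟨le_trans hxa hwx.le, hwb⟩
        refine ⟨w, ?_, hwx, hwy⟩
        have hΔpos : (0:ℝ) < w - x := by linarith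
        have hD : ‖γ w - γ x‖ ≤ C * (w - x) := hLip x w hxI hwI hwx.le
        have hDnn : (0:ℝ) ≤ ‖γ w - γ x‖ := norm_nonneg _
        have hIntNN : 0 ≤ ∫ t in x..w, H t :=
          intervalIntegral.integral_nonneg hwx.le
            (fun t _ => mul_nonneg (hgnn t) (norm_nonneg _))
        have hCΔε : 2 * C ^ 2 * (w - x) ≤ ε := by
          have h1 : 2 * C ^ 2 * (w - x) ≤ 2 * C ^ 2 * (ε / (2 * C ^ 2)) :=
            mul_le_mul_of_nonneg_left hwδ (by positivity)
          have h2 : 2 * C ^ 2 * (ε / (2 * C ^ 2)) = ε := by field_simp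
          linarith
        have key : g x ^ 2 - g w ^ 2 ≤ 2 * (∫ t in x..w, H t) + ε * (w - x) := by
          rcases le_or_gt (g x) (g w) with hcase | hcase
          · have : g x ^ 2 ≤ g w ^ 2 := by nlinarith [hgnn x]
            nlinarith [hIntNN, mul_pos hε hΔpos]
          · have h1 : g x - g w ≤ ‖γ w - γ x‖ := by
              have := hgLip x w hxI hwI
              rw [abs_sub_le_iff] at this
              linarith [this.2]
            have h2 : g x ^ 2 - g w ^ 2 ≤ 2 * g x * ‖γ w - γ x‖ := by
              nlinarith [hgnn w, hcase.le]
            by_cases hc : g x - C * (w - x) ≤ 0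
            · have h3 : 2 * g x * ‖γ w - γ x‖ ≤ ε * (w - x) := by
                nlinarith [hgnn x, hD, hCpos]
              linarith
            · push_neg at hc
              have hpt : ∀ t ∈ Set.Icc x w, (g x - C * (w - x)) * ‖γ' t‖ ≤ H t := by
                intro t ht
                have htI : t ∈ Set.Icc a b := ⟨le_trans hxI.1 ht.1, le_trans ht.2 hwb⟩
                have hgl := hgLip x t hxI htI
                rw [abs_sub_le_iff] at hgl
                have hn : ‖γ t - γ x‖ ≤ C * (t - x) := hLip x t hxI htI ht.1
                have hgt' : g x - C * (w - x) ≤ g t := by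
                  have hCmono : C * (t - x) ≤ C * (w - x) :=
                    mul_le_mul_of_nonneg_left (by linarith [ht.2]) hCpos.le
                  linarith [hgl.2]
                exact mul_le_mul_of_nonneg_right hgt' (norm_nonneg _)
              have hintc : IntervalIntegrable (fun t => (g x - C * (w - x)) * ‖γ' t‖)
                  volume x w :=
                ((continuousOn_const.mul hγ'c.norm).mono
                  (Set.uIcc_subset_Icc hxI hwI)).intervalIntegrable
              have hlow : (g x - C * (w - x)) * ‖γ w - γ x‖ ≤ ∫ t in x..w, H t := by
                calc (g x - C * (w - x)) * ‖γ w - γ x‖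
                    ≤ (g x - C * (w - x)) * ∫ t in x..w, ‖γ' t‖ := by
                      apply mul_le_mul_of_nonneg_left _ hc.le
                      rw [← hFTC x w hxI hwI hwx.le]
                      exact intervalIntegral.norm_integral_le_integral_norm hwx.le
                  _ = ∫ t in x..w, (g x - C * (w - x)) * ‖γ' t‖ := by
                      rw [intervalIntegral.integral_const_mul]
                  _ ≤ ∫ t in x..w, H t :=
                      intervalIntegral.integral_mono_on hwx.le hintc (hHint x w hxI hwI) hpt
              nlinarith [hD, hCΔε, hgnn x]
        show g a ^ 2 - g w ^ 2 ≤ 2 * F w + ε * (w - a)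
        have hFw := hFadd x w hxI hwI
        have hxs' : g a ^ 2 - g x ^ 2 ≤ 2 * F x + ε * (x - a) := hxs
        linarith
    have hbs := hsub (Set.right_mem_Icc.2 hab.le)
    have : g a ^ 2 - g b ^ 2 ≤ 2 * F b + ε * (b - a) := hbs
    exact this
  have hineqH' : ∀ X Y : ℝ, (∀ ε > (0:ℝ), X ≤ Y + ε * (b - a)) → X ≤ Y := by
    intro X Y hmain
    by_contra hlt
    push_neg at hlt
    have hba : (0:ℝ) < b - a := by linarith
    have hεp : (0:ℝ) < (X - Y) / (2 * (b - a)) := div_pos (by linarith) (by linarith)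
    have h := hmain _ hεp
    have hba' : b - a ≠ 0 := ne_of_gt hba
    have h2 : (X - Y) / (2 * (b - a)) * (b - a) = (X - Y) / 2 := by
      field_simp
    rw [h2] at h
    linarith
  have hineqH : g a ^ 2 - g b ^ 2 ≤ 2 * ∫ t in a..b, H t := hineqH' _ _ main
  have hb0 : ∀ᵐ t : ℝ ∂volume, t ≠ b := by
    refine MeasureTheory.ae_iff.2 ?_
    simpa using measure_singleton (b : ℝ)
  have haeIoc : (fun t => g t * ‖deriv γ t‖) =ᵐ[volume.restrict (Set.Ioc a b)] H := by
    have h0 : ∀ᵐ t ∂(volume.restrict (Set.Ioc a b)), t ∈ Set.Ioc a b :=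
      MeasureTheory.ae_restrict_mem measurableSet_Ioc
    have hb0' : ∀ᵐ t ∂(volume.restrict (Set.Ioc a b)), t ≠ b :=
      MeasureTheory.ae_restrict_of_ae hb0
    filter_upwards [hb0', h0] with t htb ht
    have htIoo : t ∈ Set.Ioo a b := ⟨ht.1, lt_of_le_of_ne ht.2 htb⟩
    show g t * ‖deriv γ t‖ = g t * ‖γ' t‖
    rw [hderiv_eq t htIoo]
  have hinth : IntervalIntegrable (fun t => g t * ‖deriv γ t‖) volume a b := by
    rw [intervalIntegrable_iff_integrableOn_Ioc_of_le hab.le]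
    exact ((hHc.integrableOn_compact isCompact_Icc).mono_set
      Set.Ioc_subset_Icc_self).congr haeIoc.symm
  have hIeq : (∫ t in a..b, g t * ‖deriv γ t‖) = ∫ t in a..b, H t := by
    apply intervalIntegral.integral_congr_ae
    rw [Set.uIoc_of_le hab.le]
    filter_upwards [hb0] with t htb ht
    have htIoo : t ∈ Set.Ioo a b := ⟨ht.1, lt_of_le_of_ne ht.2 htb⟩
    show g t * ‖deriv γ t‖ = g t * ‖γ' t‖
    rw [hderiv_eq t htIoo]
  exact ⟨hinth, by rw [hIeq]; exact hineqH⟩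


lemma nnLength_lb {d : ℕ} (P : Set (Pt d)) {γ : ℝ → Pt d} (hγ : PiecewiseC1 γ) :
    Metric.infDist (γ 0) P ^ 2 - Metric.infDist (γ 1) P ^ 2 ≤ 2 * nnLength P γ := by
  obtain ⟨hc, m, t, hmono, ht0, ht1, hpieces⟩ := hγ
  set u : ℕ → ℝ := fun i => t ⟨min i m, Nat.lt_succ_of_le (min_le_right _ _)⟩ with hudef
  have huval : ∀ (i : ℕ) (hi : i ≤ m), u i = t ⟨i, Nat.lt_succ_of_le hi⟩ := by
    intro i hi
    simp only [hudef]
    congr 1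
    exact Fin.ext (min_eq_left hi)
  have hu0 : u 0 = 0 := by
    rw [huval 0 (Nat.zero_le m)]
    convert ht0
    simp
  have hum : u m = 1 := by
    rw [huval m le_rfl]
    convert ht1 using 2
    exact Fin.ext rfl
  have hpiece' : ∀ i : ℕ, i < m → u i < u (i+1) ∧
      ContDiffOn ℝ 1 γ (Set.Icc (u i) (u (i+1))) := by
    intro i hi
    have h1 : u i = t ((⟨i, hi⟩ : Fin m).castSucc) := by
      rw [huval i hi.le]; congr 1
    have h2 : u (i+1) = t ((⟨i, hi⟩ : Fin m).succ) := by
      rw [huval (i+1) hi]; congr 1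
    rw [h1, h2]
    exact ⟨hmono Fin.castSucc_lt_succ, hpieces _⟩
  have hint : ∀ i : ℕ, i < m → IntervalIntegrable
      (fun s => Metric.infDist (γ s) P * ‖deriv γ s‖) volume (u i) (u (i+1)) := fun i hi =>
    (piece_key P (hpiece' i hi).1 (hpiece' i hi).2).1
  have hsum := intervalIntegral.sum_integral_adjacent_intervals
    (f := fun s => Metric.infDist (γ s) P * ‖deriv γ s‖) (μ := volume) (a := u) (n := m) hint
  have hnn : nnLength P γ = ∑ i ∈ Finset.range m,
      ∫ s in u i..u (i+1), Metric.infDist (γ s) P * ‖deriv γ s‖ := by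
    rw [hsum, hu0, hum, nnLength]
  have hterm : ∀ i ∈ Finset.range m,
      Metric.infDist (γ (u i)) P ^ 2 - Metric.infDist (γ (u (i+1))) P ^ 2
        ≤ 2 * ∫ s in u i..u (i+1), Metric.infDist (γ s) P * ‖deriv γ s‖ := fun i hi =>
    (piece_key P (hpiece' i (Finset.mem_range.1 hi)).1 (hpiece' i (Finset.mem_range.1 hi)).2).2
  calc Metric.infDist (γ 0) P ^ 2 - Metric.infDist (γ 1) P ^ 2
      = ∑ i ∈ Finset.range m,
        (Metric.infDist (γ (u i)) P ^ 2 - Metric.infDist (γ (u (i+1))) P ^ 2) := by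
        rw [Finset.sum_range_sub' (fun i => Metric.infDist (γ (u i)) P ^ 2), hu0, hum]
    _ ≤ ∑ i ∈ Finset.range m,
        2 * ∫ s in u i..u (i+1), Metric.infDist (γ s) P * ‖deriv γ s‖ :=
        Finset.sum_le_sum hterm
    _ = 2 * nnLength P γ := by rw [hnn, Finset.mul_sum]

lemma straight_line_piecewise {d : ℕ} (x p : Pt d) :
    PiecewiseC1 (fun s : ℝ => x + s • (p - x)) := by
  have hcd : ContDiff ℝ 1 (fun s : ℝ => x + s • (p - x)) :=
    contDiff_const.add (contDiff_id.smul contDiff_const)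
  refine ⟨hcd.continuous.continuousOn, 1, fun i : Fin 2 => (i.1 : ℝ), ?_, ?_, ?_, ?_⟩
  · intro i j hij
    exact Nat.cast_lt.mpr hij
  · norm_num
  · norm_num [Fin.last]
  · intro i
    exact hcd.contDiffOn

lemma deriv_straight {d : ℕ} (x p : Pt d) (s : ℝ) :
    deriv (fun s : ℝ => x + s • (p - x)) s = p - x := by
  have h : HasDerivAt (fun s : ℝ => x + s • (p - x)) ((1:ℝ) • (p - x)) s :=
    ((hasDerivAt_id s).smul_const (p - x)).const_add x
  simpa using h.deriv

lemma nnLength_straight_le {d : ℕ} (P : Set (Pt d)) (x p : Pt d) (hp : p ∈ P) :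
    nnLength P (fun s : ℝ => x + s • (p - x)) ≤ ‖x - p‖ ^ 2 / 2 := by
  set γ : ℝ → Pt d := fun s => x + s • (p - x) with hγdef
  have hpt : ∀ s ∈ Set.Icc (0:ℝ) 1,
      Metric.infDist (γ s) P * ‖deriv γ s‖ ≤ (1 - s) * (‖x - p‖ * ‖x - p‖) := by
    intro s hs
    rw [hγdef, deriv_straight x p s]
    have h1 : Metric.infDist (γ s) P ≤ dist (γ s) p := Metric.infDist_le_dist_of_mem hp
    have h2 : dist (γ s) p = (1 - s) * ‖x - p‖ := by
      rw [dist_eq_norm]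
      have he : γ s - p = (1 - s) • (x - p) := by
        simp only [hγdef]
        rw [sub_smul, one_smul, smul_sub, smul_sub]
        abel
      rw [he, norm_smul, Real.norm_eq_abs, abs_of_nonneg (by linarith [hs.2])]
    have h3 : ‖p - x‖ = ‖x - p‖ := norm_sub_rev p x
    rw [h3]
    calc Metric.infDist (γ s) P * ‖x - p‖ ≤ ((1 - s) * ‖x - p‖) * ‖x - p‖ :=
        mul_le_mul_of_nonneg_right (h1.trans_eq h2) (norm_nonneg _)
      _ = (1 - s) * (‖x - p‖ * ‖x - p‖) := by ring
  have hcont : Continuous fun s => Metric.infDist (γ s) P * ‖deriv γ s‖ := by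
    have he : (fun s => Metric.infDist (γ s) P * ‖deriv γ s‖)
        = fun s => Metric.infDist (γ s) P * ‖p - x‖ := by
      funext s; rw [hγdef, deriv_straight x p s]
    rw [he]
    have hγc : Continuous γ := by
      rw [hγdef]; exact continuous_const.add (continuous_id.smul continuous_const)
    exact ((Metric.continuous_infDist_pt P).comp hγc).mul continuous_const
  have hint1 : IntervalIntegrable (fun s => Metric.infDist (γ s) P * ‖deriv γ s‖)
      volume 0 1 := hcont.intervalIntegrable 0 1
  have hint2 : IntervalIntegrable (fun s : ℝ => (1 - s) * (‖x - p‖ * ‖x - p‖)) volume 0 1 :=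
    Continuous.intervalIntegrable (by continuity) 0 1
  have hmono := intervalIntegral.integral_mono_on zero_le_one hint1 hint2 hpt
  have hval : (∫ s in (0:ℝ)..1, (1 - s) * (‖x - p‖ * ‖x - p‖)) = ‖x - p‖ ^ 2 / 2 := by
    rw [intervalIntegral.integral_mul_const]
    have h4 : (∫ s in (0:ℝ)..1, (1 - s)) = 1/2 := by
      rw [intervalIntegral.integral_sub intervalIntegrable_const
        (continuous_id'.intervalIntegrable 0 1)]
      norm_num
    rw [h4]; ring
  calc nnLength P γ ≤ ∫ s in (0:ℝ)..1, (1 - s) * (‖x - p‖ * ‖x - p‖) := hmono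
    _ = ‖x - p‖ ^ 2 / 2 := hval

/-- For a finite nonempty `P ⊆ ℝ^d` and every `x ∈ ℝ^d`, the minimum
nearest-neighbor geodesic distance from `x` to `P` equals `2 ⬝ r_P(x)²`. Consequently, for every
`α ≥ 0`, the sublevel set of `r_P` at `α` equals the sublevel set of `min_{p ∈ P} d_N(x, p)`
at `2α²`. -/
theorem nnGeo_to_set_eq (d : ℕ) (P : Set (Pt d)) (hP : P.Finite) (hne : P.Nonempty) :
    (∀ x : Pt d, sInf {c : ℝ | ∃ p ∈ P, c = nnGeo P x p} = 2 * Metric.infDist x P ^ 2) ∧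
    (∀ α : ℝ, 0 ≤ α →
      {x : Pt d | Metric.infDist x P ≤ α} =
        {x : Pt d | sInf {c : ℝ | ∃ p ∈ P, c = nnGeo P x p} ≤ 2 * α ^ 2}) := by
  have key : ∀ x : Pt d,
      sInf {c : ℝ | ∃ p ∈ P, c = nnGeo P x p} = 2 * Metric.infDist x P ^ 2 := by
    intro x
    set r := Metric.infDist x P with hrdef
    have hrnn : 0 ≤ r := Metric.infDist_nonneg
    have hSlb : ∀ p ∈ P, ∀ l ∈ {l : ℝ | ∃ γ : ℝ → Pt d,
        PiecewiseC1 γ ∧ γ 0 = x ∧ γ 1 = p ∧ l = nnLength P γ}, r ^ 2 / 2 ≤ l := by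
      rintro p hp l ⟨γ, hγ, hγ0, hγ1, rfl⟩
      have hlow := nnLength_lb P hγ
      rw [hγ0, hγ1, Metric.infDist_zero_of_mem hp] at hlow
      rw [← hrdef] at hlow
      nlinarith [hlow]
    have hSmem : ∀ p : Pt d, nnLength P (fun s : ℝ => x + s • (p - x)) ∈
        {l : ℝ | ∃ γ : ℝ → Pt d, PiecewiseC1 γ ∧ γ 0 = x ∧ γ 1 = p ∧ l = nnLength P γ} := by
      intro p
      refine ⟨fun s : ℝ => x + s • (p - x), straight_line_piecewise x p, by simp, by simp, rfl⟩
    have hlb : ∀ p ∈ P, 2 * r ^ 2 ≤ nnGeo P x p := by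
      intro p hp
      rw [nnGeo]
      have h1 : r ^ 2 / 2 ≤ sInf {l : ℝ | ∃ γ : ℝ → Pt d,
          PiecewiseC1 γ ∧ γ 0 = x ∧ γ 1 = p ∧ l = nnLength P γ} :=
        le_csInf ⟨_, hSmem p⟩ (hSlb p hp)
      linarith
    obtain ⟨p₀, hp₀, hdist⟩ := hP.isCompact.exists_infDist_eq_dist hne x
    have hub : nnGeo P x p₀ ≤ 2 * r ^ 2 := by
      rw [nnGeo]
      have hBdd : BddBelow {l : ℝ | ∃ γ : ℝ → Pt d,
          PiecewiseC1 γ ∧ γ 0 = x ∧ γ 1 = p₀ ∧ l = nnLength P γ} :=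
        ⟨r ^ 2 / 2, fun l hl => hSlb p₀ hp₀ l hl⟩
      have h1 : sInf {l : ℝ | ∃ γ : ℝ → Pt d,
          PiecewiseC1 γ ∧ γ 0 = x ∧ γ 1 = p₀ ∧ l = nnLength P γ}
          ≤ nnLength P (fun s : ℝ => x + s • (p₀ - x)) := csInf_le hBdd (hSmem p₀)
      have h2 : nnLength P (fun s : ℝ => x + s • (p₀ - x)) ≤ ‖x - p₀‖ ^ 2 / 2 :=
        nnLength_straight_le P x p₀ hp₀
      have h3 : ‖x - p₀‖ = r := by rw [hrdef, hdist, dist_eq_norm]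
      rw [h3] at h2
      linarith
    apply le_antisymm
    · have hBddT : BddBelow {c : ℝ | ∃ p ∈ P, c = nnGeo P x p} := by
        refine ⟨2 * r ^ 2, ?_⟩
        rintro c ⟨p, hp, rfl⟩
        exact hlb p hp
      exact (csInf_le hBddT ⟨p₀, hp₀, rfl⟩).trans hub
    · have hTne : Set.Nonempty {c : ℝ | ∃ p ∈ P, c = nnGeo P x p} := ⟨nnGeo P x p₀, p₀, hp₀, rfl⟩
      apply le_csInf hTne
      rintro c ⟨p, hp, rfl⟩
      exact hlb p hp
  refine ⟨key, fun α hα => ?_⟩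
  ext x
  simp only [Set.mem_setOf_eq, key x]
  have hrnn : 0 ≤ Metric.infDist x P := Metric.infDist_nonneg
  constructor
  · intro h
    nlinarith
  · intro h
    by_contra hcon
    push_neg at hcon
    nlinarith
end
end

section
/- For any finite point set P ⊂ ℝ^d, the Gabriel graph of P with each edge pq weighted ‖p − q‖² is a 1-spanner of the edge-squared metric: for all a, b ∈ P, the shortest-path distance in the Gabriel graph with squared-Euclidean weights equals d₂(a,b). -/
open scoped BigOperators
open MeasureTheory

noncomputable section

/-- Shortest-path distance in a weighted graph given by an adjacency relation `adj` and edge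
weights `w`. -/
noncomputable def graphDist {V : Type*} (adj : V → V → Prop) (w : V → V → ℝ) (u v : V) : ℝ :=
  sInf {c : ℝ | ∃ (k : ℕ) (q : Fin (k + 1) → V), q 0 = u ∧ q (Fin.last k) = v ∧
    (∀ i : Fin k, adj (q i.castSucc) (q i.succ)) ∧
    c = ∑ i : Fin k, w (q i.castSucc) (q i.succ)}

/-- The Gabriel graph on `P`: distinct `p, q ∈ P` are adjacent iff the open ball whose diameter
is the segment `pq` (center the midpoint, radius `‖p - q‖ / 2`) contains no other point of `P`. -/
def GabrielAdj {d : ℕ} (P : Set (Pt d)) (p q : Pt d) : Prop :=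
  p ∈ P ∧ q ∈ P ∧ p ≠ q ∧
    ∀ x ∈ P, x ≠ p → x ≠ q → ¬ dist x (midpoint ℝ p q) < ‖p - q‖ / 2

namespace GabrielAux

variable {d : ℕ}

/-- Cost (sum of squared step lengths) of a polygonal chain given as a list. -/
def eCost : List (Pt d) → ℝ
  | [] => 0
  | [_] => 0
  | x :: y :: t => ‖y - x‖ ^ 2 + eCost (y :: t)

lemma eCost_nonneg : ∀ l : List (Pt d), 0 ≤ eCost l
  | [] => le_refl 0
  | [_] => le_refl 0
  | x :: y :: t => by
      have := eCost_nonneg (y :: t)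
      simp only [eCost]; positivity

lemma eCost_append : ∀ (l1 : List (Pt d)) (x : Pt d) (l2 : List (Pt d)),
    eCost (l1 ++ x :: l2) = eCost (l1 ++ [x]) + eCost (x :: l2)
  | [], x, l2 => by simp [eCost]
  | [y], x, l2 => by simp only [List.cons_append, List.nil_append, eCost]; ring
  | y :: z :: t, x, l2 => by
      have := eCost_append (z :: t) x l2
      simp only [List.cons_append, eCost, List.append_eq] at this ⊢
      rw [this]; ring

lemma eCost_ofFn : ∀ (k : ℕ) (p : Fin (k + 1) → Pt d),
    eCost (List.ofFn p) = ∑ i : Fin k, ‖p i.succ - p i.castSucc‖ ^ 2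
  | 0, p => by simp [eCost, List.ofFn_succ]
  | (k+1), p => by
      have IH := eCost_ofFn k (fun i => p i.succ)
      rw [List.ofFn_succ (f := p), List.ofFn_succ (f := fun i : Fin (k+1) => p i.succ)]
      rw [List.ofFn_succ (f := fun i : Fin (k+1) => p i.succ)] at IH
      simp only [eCost]
      rw [IH, Fin.sum_univ_succ]
      simp [Fin.succ_castSucc, -Fin.castSucc_succ]

/-- A path in the Gabriel graph from `a` to `b`. -/
def GPath (P : Set (Pt d)) (a b : Pt d) (l : List (Pt d)) : Prop :=
  l ≠ [] ∧ l.head? = some a ∧ l.getLast? = some b ∧ l.Chain' (GabrielAdj P)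

lemma GPath.trans {P : Set (Pt d)} {a x b : Pt d} {l1 l2 : List (Pt d)}
    (h1 : GPath P a x l1) (h2 : GPath P x b l2) :
    ∃ l, GPath P a b l ∧ eCost l = eCost l1 + eCost l2 := by
  obtain ⟨hn1, hh1, hl1, hc1⟩ := h1
  obtain ⟨hn2, hh2, hl2, hc2⟩ := h2
  obtain ⟨l1', rfl⟩ := List.getLast?_eq_some_iff.mp hl1
  obtain ⟨t, rfl⟩ : ∃ t, l2 = x :: t := by
    cases l2 with
    | nil => simp at hh2
    | cons y t => simp at hh2; exact ⟨t, by rw [hh2]⟩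
  refine ⟨(l1' ++ [x]) ++ t, ⟨by simp, ?_, ?_, ?_⟩, ?_⟩
  · rw [List.head?_append, hh1]; rfl
  · rw [List.getLast?_append]
    rw [List.getLast?_cons] at hl2
    cases ht : t.getLast? with
    | none => rw [ht] at hl2; simp at hl2; simp [ht, hl1, hl2]
    | some y => rw [ht] at hl2; simp at hl2; simp [ht, hl2]
  · replace hc2 := List.isChain_cons.mp hc2
    refine hc1.append hc2.2 ?_
    intro u hu v hv
    rw [hl1] at hu
    simp only [Option.mem_def, Option.some.injEq] at hu
    subst hu
    exact hc2.1 v hv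
  · rw [List.append_assoc, List.singleton_append, eCost_append]

lemma inside_ball {a b x : Pt d} (h : dist x (midpoint ℝ a b) < ‖a - b‖ / 2) :
    dist a x < dist a b ∧ dist x b < dist a b ∧ ‖a - x‖ ^ 2 + ‖x - b‖ ^ 2 ≤ ‖a - b‖ ^ 2 := by
  have hd : dist a b = ‖a - b‖ := dist_eq_norm a b
  have hm1 : dist a (midpoint ℝ a b) = dist a b / 2 := by
    rw [dist_left_midpoint]; norm_num; ring
  have hm2 : dist (midpoint ℝ a b) b = dist a b / 2 := by
    rw [dist_midpoint_right]; norm_num; ring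
  have hax : dist a x < dist a b := by
    have t1 := dist_triangle a (midpoint ℝ a b) x
    have t2 : dist (midpoint ℝ a b) x = dist x (midpoint ℝ a b) := dist_comm _ _
    linarith
  have hxb : dist x b < dist a b := by
    have t1 := dist_triangle x (midpoint ℝ a b) b
    linarith
  have hm : midpoint ℝ a b = (2:ℝ)⁻¹ • (a + b) := by
    rw [midpoint_eq_smul_add, invOf_eq_inv]
  have hpar := parallelogram_law_with_norm ℝ (x - midpoint ℝ a b) ((2:ℝ)⁻¹ • (a - b))
  have e1 : (2:ℝ)⁻¹ • (a - b) - (x - midpoint ℝ a b) = a - x := by rw [hm]; module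
  have e2 : (x - midpoint ℝ a b) + (2:ℝ)⁻¹ • (a - b) = x - b := by rw [hm]; module
  rw [e2, norm_sub_rev (x - midpoint ℝ a b), e1] at hpar
  have hv : ‖(2:ℝ)⁻¹ • (a - b)‖ = ‖a - b‖ / 2 := by
    rw [norm_smul]; simp [norm_inv]; ring
  have hxm : ‖x - midpoint ℝ a b‖ < ‖a - b‖ / 2 := by rw [← dist_eq_norm]; exact h
  refine ⟨hax, hxb, ?_⟩
  have key : ‖a - x‖ ^ 2 + ‖x - b‖ ^ 2
      = 2 * ‖x - midpoint ℝ a b‖ ^ 2 + 2 * (‖a - b‖ / 2) ^ 2 := by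
    rw [← hv]; simp only [pow_two]; linarith
  rw [key]
  nlinarith [norm_nonneg (x - midpoint ℝ a b), norm_nonneg (a - b), hxm]

/-- Key lemma: between any two points of `P` there is a Gabriel path of cost at most the
squared distance. -/
lemma gabriel_path {P : Set (Pt d)} (hP : P.Finite) :
    ∀ n : ℕ, ∀ a b : Pt d, a ∈ P → b ∈ P →
      {q : Pt d × Pt d | q.1 ∈ P ∧ q.2 ∈ P ∧ dist q.1 q.2 < dist a b}.ncard ≤ n →
      ∃ l, GPath P a b l ∧ eCost l ≤ ‖a - b‖ ^ 2 := by
  intro n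
  induction n using Nat.strong_induction_on with
  | _ n IH =>
  intro a b ha hb hn
  by_cases hab : a = b
  · subst hab
    exact ⟨[a], ⟨by simp, rfl, rfl, List.isChain_singleton a⟩, by
      simp only [eCost]; positivity⟩
  by_cases hadj : GabrielAdj P a b
  · refine ⟨[a, b], ⟨by simp, rfl, rfl, List.isChain_pair.mpr hadj⟩, ?_⟩
    simp only [eCost]
    rw [norm_sub_rev]
    simp
  · have hx : ∃ x ∈ P, x ≠ a ∧ x ≠ b ∧ dist x (midpoint ℝ a b) < ‖a - b‖ / 2 := by
      by_contra hcon
      push_neg at hcon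
      exact hadj ⟨ha, hb, hab, fun x hxP h1 h2 => not_lt.mpr (hcon x hxP h1 h2)⟩
    obtain ⟨x, hxP, hxa, hxb, hball⟩ := hx
    obtain ⟨d1, d2, dsum⟩ := inside_ball hball
    have hfin : ∀ r : ℝ, {q : Pt d × Pt d | q.1 ∈ P ∧ q.2 ∈ P ∧ dist q.1 q.2 < r}.Finite :=
      fun r => (hP.prod hP).subset (fun q hq => ⟨hq.1, hq.2.1⟩)
    have hsub : ∀ u v : Pt d, u ∈ P → v ∈ P → dist u v < dist a b →
        {q : Pt d × Pt d | q.1 ∈ P ∧ q.2 ∈ P ∧ dist q.1 q.2 < dist u v}.ncard <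
        {q : Pt d × Pt d | q.1 ∈ P ∧ q.2 ∈ P ∧ dist q.1 q.2 < dist a b}.ncard := by
      intro u v hu hv huv
      apply Set.ncard_lt_ncard _ (hfin _)
      rw [Set.ssubset_iff_subset_ne]
      constructor
      · intro q hq
        exact ⟨hq.1, hq.2.1, lt_trans hq.2.2 huv⟩
      · intro heq
        have hmem : (u, v) ∈ {q : Pt d × Pt d | q.1 ∈ P ∧ q.2 ∈ P ∧ dist q.1 q.2 < dist a b} :=
          ⟨hu, hv, huv⟩
        rw [← heq] at hmem
        exact absurd hmem.2.2 (lt_irrefl _)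
    obtain ⟨l1, hl1, hc1⟩ :=
      IH _ (lt_of_lt_of_le (hsub a x ha hxP d1) hn) a x ha hxP le_rfl
    obtain ⟨l2, hl2, hc2⟩ :=
      IH _ (lt_of_lt_of_le (hsub x b hxP hb d2) hn) x b hxP hb le_rfl
    obtain ⟨l, hl, hcl⟩ := hl1.trans hl2
    exact ⟨l, hl, by rw [hcl]; linarith⟩

lemma gabriel_path' {P : Set (Pt d)} (hP : P.Finite) {a b : Pt d} (ha : a ∈ P) (hb : b ∈ P) :
    ∃ l, GPath P a b l ∧ eCost l ≤ ‖a - b‖ ^ 2 :=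
  gabriel_path hP _ a b ha hb le_rfl

/-- Chains of points of `P` are dominated by Gabriel paths. -/
lemma chain_gpath {P : Set (Pt d)} (hP : P.Finite) :
    ∀ (k : ℕ) (p : Fin (k + 1) → Pt d), (∀ i, p i ∈ P) →
      ∃ l, GPath P (p 0) (p (Fin.last k)) l ∧
        eCost l ≤ ∑ i : Fin k, ‖p i.succ - p i.castSucc‖ ^ 2
  | 0, p, hp =>
      ⟨[p 0], ⟨by simp, rfl, by simp [Fin.last], List.isChain_singleton _⟩, by
        simp [eCost]⟩
  | (k+1), p, hp => by
      obtain ⟨l1, h1, hc1⟩ := gabriel_path' hP (hp 0) (hp 1)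
      obtain ⟨l2, h2, hc2⟩ := chain_gpath hP k (fun i => p i.succ) (fun i => hp _)
      have e0 : (Fin.succ 0 : Fin (k + 2)) = 1 := rfl
      have el : Fin.succ (Fin.last k) = Fin.last (k + 1) := Fin.succ_last k
      rw [e0, el] at h2
      obtain ⟨l, hl, hcl⟩ := h1.trans h2
      refine ⟨l, hl, ?_⟩
      rw [hcl, Fin.sum_univ_succ]
      have hc2' : eCost l2 ≤ ∑ i : Fin k, ‖p i.succ.succ - p i.castSucc.succ‖ ^ 2 := hc2
      have hB : ∑ i : Fin k, ‖p i.succ.succ - p i.castSucc.succ‖ ^ 2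
          = ∑ i : Fin k, ‖p i.succ.succ - p i.succ.castSucc‖ ^ 2 :=
        Finset.sum_congr rfl fun i _ => by rw [Fin.succ_castSucc]
      rw [hB] at hc2'
      have hc1' : eCost l1 ≤ ‖p (Fin.succ (0 : Fin (k+1))) - p (Fin.castSucc (0 : Fin (k+1)))‖ ^ 2 := by
        rw [norm_sub_rev]
        exact hc1
      exact le_trans (add_le_add hc1' hc2') (le_of_eq rfl)

/-- Convert a Gabriel path (as a list) into a `Fin`-indexed chain with matching cost. -/
lemma gpath_mem {P : Set (Pt d)} {a b : Pt d} {l : List (Pt d)} (h : GPath P a b l) :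
    ∃ (k : ℕ) (q : Fin (k + 1) → Pt d), q 0 = a ∧ q (Fin.last k) = b ∧
      (∀ i : Fin k, GabrielAdj P (q i.castSucc) (q i.succ)) ∧
      eCost l = ∑ i : Fin k, ‖q i.castSucc - q i.succ‖ ^ 2 := by
  obtain ⟨hn, hh, hlast, hchain⟩ := h
  cases l with
  | nil => exact absurd rfl hn
  | cons y t =>
    have hlen : (y :: t).length = t.length + 1 := by simp
    refine ⟨t.length, fun i => (y :: t).get (Fin.cast hlen.symm i), ?_, ?_, ?_, ?_⟩
    · simp only [List.head?_cons, Option.some.injEq] at hh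
      rw [← hh]; rfl
    · have h1 : (y :: t).getLast (by simp) = b := by
        rw [List.getLast?_eq_getLast (by simp)] at hlast
        exact Option.some_injective _ hlast
      rw [← h1, List.getLast_eq_getElem]
      rfl
    · intro i
      exact List.isChain_iff_getElem.mp hchain i.val (by simpa using i.isLt)
    · have hofn : List.ofFn (fun i : Fin (t.length + 1) =>
          (y :: t).get (Fin.cast hlen.symm i)) = y :: t := by
        apply List.ext_get
        · simp
        · intro n h1 h2
          rw [List.get_ofFn]
          rfl
      conv_lhs => rw [← hofn]
      rw [eCost_ofFn]
      exact Finset.sum_congr rfl fun i _ => by rw [norm_sub_rev]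

end GabrielAux

open GabrielAux in
/-- For any finite `P ⊆ ℝ^d`, the Gabriel graph of `P` with edges weighted by
squared Euclidean length is a 1-spanner of the edge-squared metric. -/
theorem gabriel_one_spanner_edgeSq (d : ℕ) (P : Set (Pt d)) (hP : P.Finite)
    (a b : Pt d) (ha : a ∈ P) (hb : b ∈ P) :
    graphDist (GabrielAdj P) (fun u v => ‖u - v‖ ^ 2) a b = edgeSq P a b := by
  classical
  unfold graphDist edgeSq
  show sInf {c : ℝ | ∃ (k : ℕ) (q : Fin (k + 1) → Pt d), q 0 = a ∧ q (Fin.last k) = b ∧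
      (∀ i : Fin k, GabrielAdj P (q i.castSucc) (q i.succ)) ∧
      c = ∑ i : Fin k, ‖q i.castSucc - q i.succ‖ ^ 2}
    = sInf {c : ℝ | ∃ (k : ℕ) (p : Fin (k + 1) → Pt d), p 0 = a ∧ p (Fin.last k) = b ∧
      (∀ i, p i ∈ P) ∧ c = ∑ i : Fin k, ‖p i.succ - p i.castSucc‖ ^ 2}
  set S1 : Set ℝ := {c : ℝ | ∃ (k : ℕ) (q : Fin (k + 1) → Pt d), q 0 = a ∧ q (Fin.last k) = b ∧
      (∀ i : Fin k, GabrielAdj P (q i.castSucc) (q i.succ)) ∧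
      c = ∑ i : Fin k, ‖q i.castSucc - q i.succ‖ ^ 2} with hS1
  set S2 : Set ℝ := {c : ℝ | ∃ (k : ℕ) (p : Fin (k + 1) → Pt d), p 0 = a ∧ p (Fin.last k) = b ∧
      (∀ i, p i ∈ P) ∧ c = ∑ i : Fin k, ‖p i.succ - p i.castSucc‖ ^ 2} with hS2
  have hsub : S1 ⊆ S2 := by
    rintro c ⟨k, q, h0, hl, hadj, rfl⟩
    refine ⟨k, q, h0, hl, ?_, ?_⟩
    · intro i
      by_cases hik : i.val < k
      · have he : (⟨i.val, hik⟩ : Fin k).castSucc = i := by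
          apply Fin.ext; rfl
        rw [← he]
        exact (hadj ⟨i.val, hik⟩).1
      · have hik' : i.val = k := le_antisymm (Nat.lt_succ_iff.mp i.isLt) (not_lt.mp hik)
        cases k with
        | zero =>
          have : i = 0 := Fin.ext (by simp [hik'])
          rw [this, h0]; exact ha
        | succ j =>
          have : i = (⟨j, Nat.lt_succ_self j⟩ : Fin (j + 1)).succ := Fin.ext (by simp [hik'])
          rw [this]
          exact (hadj ⟨j, Nat.lt_succ_self j⟩).2.1
    · exact Finset.sum_congr rfl fun i _ => by rw [norm_sub_rev]
  have bdd2 : BddBelow S2 := by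
    refine ⟨0, ?_⟩
    rintro c ⟨k, p, _, _, _, rfl⟩
    positivity
  have bdd1 : BddBelow S1 := bdd2.mono hsub
  have ne2 : S2.Nonempty := by
    refine ⟨∑ i : Fin 1, ‖(![a, b] : Fin 2 → Pt d) i.succ - ![a, b] i.castSucc‖ ^ 2,
      1, ![a, b], ?_, ?_, ?_, rfl⟩
    · rfl
    · rfl
    · intro i
      fin_cases i
      · exact ha
      · exact hb
  have ne1 : S1.Nonempty := by
    obtain ⟨l, hgl, _⟩ := gabriel_path' hP ha hb
    obtain ⟨k', q, hq0, hql, hadj, hEq⟩ := gpath_mem hgl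
    exact ⟨eCost l, k', q, hq0, hql, hadj, hEq⟩
  refine le_antisymm (le_csInf ne2 ?_) (csInf_le_csInf bdd2 ne1 hsub)
  rintro c ⟨k, p, h0, hl, hmem, rfl⟩
  obtain ⟨l, hgl, hcost⟩ := chain_gpath hP k p hmem
  rw [h0, hl] at hgl
  obtain ⟨k', q, hq0, hql, hadj, hEq⟩ := gpath_mem hgl
  exact le_trans (csInf_le bdd1 ⟨k', q, hq0, hql, hadj, hEq⟩) hcost
end
end

section
/- For every dimension d there is a constant C = C(d) such that for every finite set P ⊂ ℝ^d with |P| = n and every ε ∈ (0,1), there exists a set E of at most C·n·ε^{−d/2} unordered pairs of points of P such that the graph (P, E) with edge weights ‖u − v‖² is a (1+ε)-spanner of the edge-squared metric: for all a, b ∈ P, d₂(a,b) ≤ d_E(a,b) ≤ (1+ε)·d₂(a,b), where d_E is the shortest-path distance in (P, E). -/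
open scoped BigOperators
open MeasureTheory

noncomputable section

/-- Shortest-path distance in the graph whose (undirected) edges are the pairs in `E`, with edge
weights `w`. -/
noncomputable def spanDist {d : ℕ} (E : Set (Pt d × Pt d)) (w : Pt d → Pt d → ℝ)
    (a b : Pt d) : ℝ :=
  sInf {c : ℝ | ∃ (k : ℕ) (q : Fin (k + 1) → Pt d), q 0 = a ∧ q (Fin.last k) = b ∧
    (∀ i : Fin k, (q i.castSucc, q i.succ) ∈ E ∨ (q i.succ, q i.castSucc) ∈ E) ∧
    c = ∑ i : Fin k, w (q i.castSucc) (q i.succ)}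

def spanSet {d : ℕ} (E : Set (Pt d × Pt d)) (w : Pt d → Pt d → ℝ) (a b : Pt d) : Set ℝ :=
  {c : ℝ | ∃ (k : ℕ) (q : Fin (k + 1) → Pt d), q 0 = a ∧ q (Fin.last k) = b ∧
    (∀ i : Fin k, (q i.castSucc, q i.succ) ∈ E ∨ (q i.succ, q i.castSucc) ∈ E) ∧
    c = ∑ i : Fin k, w (q i.castSucc) (q i.succ)}

lemma nil_mem {d : ℕ} (E : Set (Pt d × Pt d)) (w : Pt d → Pt d → ℝ) (a : Pt d) :
    (0 : ℝ) ∈ spanSet E w a a := by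
  refine ⟨0, fun _ => a, rfl, rfl, fun i => i.elim0, by simp⟩

lemma cons_mem {d : ℕ} {E : Set (Pt d × Pt d)} {w : Pt d → Pt d → ℝ} {x y b : Pt d} {c : ℝ}
    (hxy : (x, y) ∈ E ∨ (y, x) ∈ E) (hc : c ∈ spanSet E w y b) :
    w x y + c ∈ spanSet E w x b := by
  obtain ⟨k, q, h0, hl, he, hsum⟩ := hc
  refine ⟨k + 1, Fin.cases x q, by simp, ?_, ?_, ?_⟩
  · show Fin.cases x q (Fin.last (k+1)) = b
    rw [← Fin.succ_last, Fin.cases_succ]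
    exact hl
  · intro i
    induction i using Fin.cases with
    | zero =>
      simp only [Fin.castSucc_zero, Fin.cases_zero, Fin.cases_succ, h0]
      exact hxy
    | succ j =>
      simp only [← Fin.succ_castSucc, Fin.cases_succ]
      exact he j
  · rw [Fin.sum_univ_succ, hsum]
    simp only [Fin.castSucc_zero, Fin.cases_zero, ← Fin.succ_castSucc, Fin.cases_succ, h0]

lemma append_mem {d : ℕ} {E : Set (Pt d × Pt d)} {w : Pt d → Pt d → ℝ} {m b : Pt d} {c₂ : ℝ}
    (h2 : c₂ ∈ spanSet E w m b) : ∀ {a : Pt d} {c₁ : ℝ}, c₁ ∈ spanSet E w a m →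
    c₁ + c₂ ∈ spanSet E w a b := by
  suffices H : ∀ (k : ℕ) (q : Fin (k+1) → Pt d), q (Fin.last k) = m →
      (∀ i : Fin k, (q i.castSucc, q i.succ) ∈ E ∨ (q i.succ, q i.castSucc) ∈ E) →
      (∑ i : Fin k, w (q i.castSucc) (q i.succ)) + c₂ ∈ spanSet E w (q 0) b by
    rintro a c₁ ⟨k, q, h0, hl, he, hsum⟩
    rw [hsum, ← h0]
    exact H k q hl he
  intro k
  induction k with
  | zero =>
    intro q hl _
    have h0 : q 0 = m := hl
    simpa [h0] using h2
  | succ k ih =>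
    intro q hl he
    have key := ih (q ∘ Fin.succ)
      (by rw [Function.comp_apply, Fin.succ_last]; exact hl)
      (fun i => by
        simp only [Function.comp_apply, Fin.succ_castSucc]
        exact he i.succ)
    have h01 : (q 0, q 1) ∈ E ∨ (q 1, q 0) ∈ E := by
      have := he 0
      rwa [Fin.castSucc_zero, Fin.succ_zero_eq_one] at this
    have step := cons_mem h01 key
    have hsum2 : (∑ i : Fin (k+1), w (q i.castSucc) (q i.succ)) + c₂
        = w (q 0) (q 1) + ((∑ i : Fin k, w ((q ∘ Fin.succ) i.castSucc) ((q ∘ Fin.succ) i.succ)) + c₂) := by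
      rw [Fin.sum_univ_succ, add_assoc]
      simp only [Function.comp_apply, Fin.succ_castSucc, Fin.castSucc_zero, Fin.succ_zero_eq_one]
    rw [hsum2]
    exact step

lemma spanSet_nonneg {d : ℕ} {E : Set (Pt d × Pt d)} {w : Pt d → Pt d → ℝ}
    (hw : ∀ u v, 0 ≤ w u v) {a b : Pt d} {c : ℝ} (hc : c ∈ spanSet E w a b) : 0 ≤ c := by
  obtain ⟨k, q, _, _, _, hsum⟩ := hc
  rw [hsum]
  exact Finset.sum_nonneg fun i _ => hw _ _

def edgeSet {d : ℕ} (P : Set (Pt d)) (a b : Pt d) : Set ℝ :=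
  {c : ℝ | ∃ (k : ℕ) (p : Fin (k + 1) → Pt d), p 0 = a ∧ p (Fin.last k) = b ∧
    (∀ i, p i ∈ P) ∧ c = ∑ i : Fin k, ‖p i.succ - p i.castSucc‖ ^ 2}

lemma edgeSet_nonneg {d : ℕ} {P : Set (Pt d)} {a b : Pt d} {c : ℝ} (hc : c ∈ edgeSet P a b) :
    0 ≤ c := by
  obtain ⟨k, p, _, _, _, hsum⟩ := hc
  rw [hsum]
  exact Finset.sum_nonneg fun i _ => by positivity

lemma single_mem_edgeSet {d : ℕ} {P : Set (Pt d)} {a b : Pt d} (ha : a ∈ P) (hb : b ∈ P) :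
    ‖b - a‖ ^ 2 ∈ edgeSet P a b := by
  refine ⟨1, ![a, b], rfl, rfl, ?_, ?_⟩
  · intro i
    fin_cases i <;> simpa
  · rw [Fin.sum_univ_one]
    rfl

lemma spanSet_subset_edgeSet {d : ℕ} {P : Set (Pt d)} {E : Set (Pt d × Pt d)} {a b : Pt d} {c : ℝ}
    (hE : ∀ e ∈ E, e.1 ∈ P ∧ e.2 ∈ P) (ha : a ∈ P)
    (hc : c ∈ spanSet E (fun u v => ‖u - v‖ ^ 2) a b) : c ∈ edgeSet P a b := by
  obtain ⟨k, q, h0, hl, he, hsum⟩ := hc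
  refine ⟨k, q, h0, hl, ?_, ?_⟩
  · intro i
    induction i using Fin.cases with
    | zero => rw [h0]; exact ha
    | succ j =>
      rcases he j with h | h
      · exact (hE _ h).2
      · exact (hE _ h).1
  · rw [hsum]
    apply Finset.sum_congr rfl
    intro j _
    rw [norm_sub_rev]

lemma yao_bound {d : ℕ} (P : Finset (Pt d)) (ε : ℝ) (hε0 : 0 < ε) (hε1 : ε < 1)
    (E : Set (Pt d × Pt d))
    (hcov : ∀ u ∈ P, ∀ v ∈ P, v ≠ u → ∃ x, x ∈ P ∧ x ≠ u ∧ (u, x) ∈ E ∧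
      ‖x - u‖ ≤ ‖v - u‖ ∧ (1 - ε/8) * (‖v - u‖ * ‖x - u‖) ≤ (inner ℝ (v - u) (x - u) : ℝ)) :
    ∀ u ∈ P, ∀ v ∈ P, ∃ c ∈ spanSet E (fun a b => ‖a - b‖ ^ 2) u v,
      c ≤ (1 + ε) * ‖v - u‖ ^ 2 := by
  classical
  set W : Pt d → Pt d → ℝ := fun a b => ‖a - b‖ ^ 2 with hW
  have key : ∀ n : ℕ, ∀ u v : Pt d, u ∈ P → v ∈ P →
      ((P ×ˢ P).filter (fun p => ‖p.2 - p.1‖ < ‖v - u‖)).card ≤ n →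
      ∃ c ∈ spanSet E W u v, c ≤ (1 + ε) * ‖v - u‖ ^ 2 := by
    intro n
    induction n using Nat.strong_induction_on with
    | _ n ih =>
      intro u v hu hv hN
      by_cases hvu : v = u
      · subst hvu
        exact ⟨0, nil_mem E W v, by positivity⟩
      obtain ⟨x, hxP, hxu, hxE, hxle, hxinner⟩ := hcov u hu v hv hvu
      by_cases hxv : x = v
      · subst hxv
        refine ⟨W u x + 0, cons_mem (Or.inl hxE) (nil_mem E W x), ?_⟩
        have : ‖u - x‖ = ‖x - u‖ := norm_sub_rev u x
        simp only [hW, add_zero, this]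
        nlinarith [norm_nonneg (x - u), sq_nonneg (‖x - u‖)]
      · -- recursive case
        set r : ℝ := ‖v - u‖ with hr
        set a : ℝ := ‖x - u‖ with ha
        set b : ℝ := ‖v - x‖ with hb
        have ha0 : 0 < a := by
          rw [ha, norm_pos_iff, sub_ne_zero]
          exact hxu
        have hr0 : 0 < r := by
          rw [hr, norm_pos_iff, sub_ne_zero]
          exact hvu
        have hbsq : b ^ 2 = r ^ 2 - 2 * (inner ℝ (v - u) (x - u) : ℝ) + a ^ 2 := by
          rw [hb, hr, ha, ← sub_sub_sub_cancel_right v x u]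
          exact norm_sub_sq_real _ _
        have hb2 : b ^ 2 < r ^ 2 := by
          nlinarith [hxinner, mul_le_mul_of_nonneg_left hxle ha0.le, mul_pos hr0 ha0,
            mul_nonneg (mul_nonneg hε0.le hr0.le) ha0.le]
        have hblt : b < r := lt_of_pow_lt_pow_left₀ 2 hr0.le hb2
        have hcard : ((P ×ˢ P).filter (fun p => ‖p.2 - p.1‖ < ‖v - x‖)).card < n := by
          have hss : ((P ×ˢ P).filter (fun p => ‖p.2 - p.1‖ < ‖v - x‖)) ⊂
              ((P ×ˢ P).filter (fun p => ‖p.2 - p.1‖ < ‖v - u‖)) := by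
            refine Finset.ssubset_iff_of_subset ?_ |>.2 ?_
            · intro p hp
              rw [Finset.mem_filter] at hp ⊢
              exact ⟨hp.1, lt_trans hp.2 hblt⟩
            · refine ⟨(x, v), ?_, ?_⟩
              · simp only [Finset.mem_filter, Finset.mem_product]
                exact ⟨⟨hxP, hv⟩, hblt⟩
              · simp only [Finset.mem_filter, Finset.mem_product, not_and]
                intro _
                simp
            
          exact lt_of_lt_of_le (Finset.card_lt_card hss) hN
      
        obtain ⟨c₂, hc₂mem, hc₂le⟩ := ih _ hcard x v hxP hv le_rfl
        refine ⟨W u x + c₂, cons_mem (Or.inl hxE) hc₂mem, ?_⟩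
        have huxa : W u x = a ^ 2 := by
          simp only [hW]
          rw [norm_sub_rev]
        rw [huxa]
        have hbv : ‖v - x‖ = b := rfl
        rw [hbv] at hc₂le
        nlinarith [hc₂le, hbsq, hxinner, mul_le_mul_of_nonneg_left hxle ha0.le,
          mul_pos ha0 hr0, mul_nonneg (mul_nonneg hε0.le ha0.le) hr0.le,
          mul_nonneg (mul_nonneg (mul_nonneg hε0.le hε0.le) ha0.le) hr0.le,
          mul_nonneg (mul_nonneg hε0.le ha0.le) (sub_nonneg.2 hxle),
          mul_nonneg (mul_nonneg (mul_nonneg hε0.le hε0.le) ha0.le) (sub_nonneg.2 hxle)]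
  intro u hu v hv
  exact key _ u v hu hv le_rfl

lemma floor_close {a b : ℝ} (h : ⌊a⌋ = ⌊b⌋) : |a - b| < 1 := by
  have h' : ((⌊a⌋ : ℤ) : ℝ) = ((⌊b⌋ : ℤ) : ℝ) := by rw [h]
  rw [abs_sub_lt_iff]
  constructor <;> linarith [Int.floor_le a, Int.floor_le b, Int.lt_floor_add_one a,
    Int.lt_floor_add_one b]

lemma angle_bound {d : ℕ} {M : ℕ} (hM : 0 < M) {ε : ℝ} (hε0 : 0 < ε)
    (hM2 : 4 * (d : ℝ) / ε ≤ (M : ℝ) ^ 2) {x y : Pt d} (hx : x ≠ 0) (hy : y ≠ 0)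
    (hfl : ∀ i, ⌊(M : ℝ) * x i / ‖x‖⌋ = ⌊(M : ℝ) * y i / ‖y‖⌋) :
    (1 - ε / 8) * (‖x‖ * ‖y‖) ≤ (inner ℝ x y : ℝ) := by
  have hxn : (0 : ℝ) < ‖x‖ := norm_pos_iff.2 hx
  have hyn : (0 : ℝ) < ‖y‖ := norm_pos_iff.2 hy
  have hMr : (0 : ℝ) < (M : ℝ) := by exact_mod_cast hM
  set x' : Pt d := (‖x‖⁻¹ : ℝ) • x with hx'def
  set y' : Pt d := (‖y‖⁻¹ : ℝ) • y with hy'def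
  have hx1 : ‖x'‖ = 1 := norm_smul_inv_norm (𝕜 := ℝ) hx
  have hy1 : ‖y'‖ = 1 := norm_smul_inv_norm (𝕜 := ℝ) hy
  have hcoord : ∀ i, |x' i - y' i| ≤ 1 / M := by
    intro i
    have e1 : (M : ℝ) * x i / ‖x‖ = (M : ℝ) * x' i := by
      rw [hx'def]
      simp only [PiLp.smul_apply, smul_eq_mul]
      field_simp
    have e2 : (M : ℝ) * y i / ‖y‖ = (M : ℝ) * y' i := by
      rw [hy'def]
      simp only [PiLp.smul_apply, smul_eq_mul]
      field_simp
    have h := floor_close (a := (M : ℝ) * x' i) (b := (M : ℝ) * y' i) (by rw [← e1, ← e2]; exact hfl i)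
    have h2 : (M : ℝ) * |x' i - y' i| < 1 := by
      calc (M : ℝ) * |x' i - y' i| = |(M : ℝ) * x' i - (M : ℝ) * y' i| := by
            rw [← mul_sub, abs_mul, abs_of_pos hMr]
        _ < 1 := h
    rw [le_div_iff₀ hMr]
    linarith [h2]
  have hnormsq : ‖x' - y'‖ ^ 2 ≤ (d : ℝ) / M ^ 2 := by
    have e : ‖x' - y'‖ ^ 2 = ∑ i, ‖(x' - y') i‖ ^ 2 := by
      rw [EuclideanSpace.norm_eq]
      exact Real.sq_sqrt (Finset.sum_nonneg fun i _ => by positivity)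
    rw [e]
    calc ∑ i, ‖(x' - y') i‖ ^ 2 ≤ ∑ _i : Fin d, (1 / M : ℝ) ^ 2 := by
          apply Finset.sum_le_sum
          intro i _
          have : ‖(x' - y') i‖ = |x' i - y' i| := by
            simp [PiLp.sub_apply, Real.norm_eq_abs]
          rw [this]
          have h2 := hcoord i
          have h3 : (0:ℝ) ≤ |x' i - y' i| := abs_nonneg _
          nlinarith
      _ = (d : ℝ) / M ^ 2 := by
          rw [Finset.sum_const, Finset.card_univ, Fintype.card_fin, nsmul_eq_mul]
          field_simp
  have hinner' : 1 - ε / 8 ≤ (inner ℝ x' y' : ℝ) := by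
    have hsq := norm_sub_sq_real x' y'
    rw [hx1, hy1] at hsq
    have hd4 : (d : ℝ) / M ^ 2 ≤ ε / 4 := by
      have h1 : 4 * (d : ℝ) ≤ (M : ℝ) ^ 2 * ε := (div_le_iff₀ hε0).1 hM2
      have h2 : (0 : ℝ) < (M : ℝ) ^ 2 := by positivity
      rw [div_le_div_iff₀ h2 (by norm_num : (0:ℝ) < 4)]
      linarith
    nlinarith [hnormsq, hsq]
  have hfact : (inner ℝ x y : ℝ) = ‖x‖ * ‖y‖ * (inner ℝ x' y' : ℝ) := by
    rw [hx'def, hy'def, real_inner_smul_left, real_inner_smul_right]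
    field_simp
  rw [hfact]
  have hxy : (0 : ℝ) < ‖x‖ * ‖y‖ := mul_pos hxn hyn
  nlinarith [mul_le_mul_of_nonneg_left hinner' hxy.le]

lemma exists_coord_ne {d : ℕ} {x : Pt d} (hx : x ≠ 0) : ∃ i, x i ≠ 0 := by
  by_contra h
  push_neg at h
  exact hx (PiLp.ext (fun i => by simp [h i]))

lemma abs_coord_le_norm {d : ℕ} (x : Pt d) (i : Fin d) : |x i| ≤ ‖x‖ := by
  rw [EuclideanSpace.norm_eq, ← Real.sqrt_sq_eq_abs]
  apply Real.sqrt_le_sqrt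
  have := Finset.single_le_sum (f := fun j => ‖x j‖ ^ 2) (fun j _ => by positivity)
    (Finset.mem_univ i)
  simpa [Real.norm_eq_abs, sq_abs] using this

lemma chain_bound {d : ℕ} {E : Set (Pt d × Pt d)} {P : Finset (Pt d)} {ε : ℝ} (hε0 : 0 < ε)
    (hpairs : ∀ u ∈ P, ∀ v ∈ P, ∃ c ∈ spanSet E (fun a b => ‖a - b‖ ^ 2) u v,
      c ≤ (1 + ε) * ‖v - u‖ ^ 2) :
    ∀ (k : ℕ) (p : Fin (k + 1) → Pt d), (∀ i, p i ∈ (↑P : Set (Pt d))) →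
      ∃ c ∈ spanSet E (fun a b => ‖a - b‖ ^ 2) (p 0) (p (Fin.last k)),
        c ≤ (1 + ε) * ∑ i : Fin k, ‖p i.succ - p i.castSucc‖ ^ 2 := by
  intro k
  induction k with
  | zero =>
    intro p _
    exact ⟨0, nil_mem _ _ _, by simp⟩
  | succ k ih =>
    intro p hp
    obtain ⟨c₂, hc₂mem, hc₂le⟩ := ih (p ∘ Fin.succ) (fun i => hp _)
    obtain ⟨c₁, hc₁mem, hc₁le⟩ := hpairs (p 0) (hp 0) (p 1) (hp 1)
    have hc₁mem' : c₁ ∈ spanSet E (fun a b => ‖a - b‖ ^ 2) (p 0) ((p ∘ Fin.succ) 0) := by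
      have e : (p ∘ Fin.succ) 0 = p 1 := by rw [Function.comp_apply, Fin.succ_zero_eq_one]
      rwa [← e] at hc₁mem
    have happ := append_mem hc₂mem hc₁mem'
    refine ⟨c₁ + c₂, ?_, ?_⟩
    · have e : (p ∘ Fin.succ) (Fin.last k) = p (Fin.last (k + 1)) := by
        rw [Function.comp_apply, Fin.succ_last]
      rwa [e] at happ
    · rw [Fin.sum_univ_succ]
      simp only [Function.comp_apply, Fin.succ_castSucc] at hc₂le
      simp only [Fin.castSucc_zero, Fin.succ_zero_eq_one]
      ring_nf
      ring_nf at hc₁le hc₂le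
      linarith

theorem edgeSq_spanner_core (d : ℕ) (P : Finset (Pt d)) (ε : ℝ) (hε0 : 0 < ε) (hε1 : ε < 1) :
      ∃ E : Finset (Pt d × Pt d),
        (∀ e ∈ E, e.1 ∈ P ∧ e.2 ∈ P) ∧
        (E.card : ℝ) ≤ (4 * Real.sqrt d + 3) ^ d * P.card * ε ^ (-(d : ℝ) / 2) ∧
        ∀ a ∈ P, ∀ b ∈ P,
          edgeSq ↑P a b ≤ spanDist ↑E (fun u v => ‖u - v‖ ^ 2) a b ∧
          spanDist ↑E (fun u v => ‖u - v‖ ^ 2) a b ≤ (1 + ε) * edgeSq ↑P a b := by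
  classical
  set M : ℕ := ⌈Real.sqrt (4 * d / ε)⌉₊ with hMdef
  have hMge : Real.sqrt (4 * d / ε) ≤ (M : ℝ) := Nat.le_ceil _
  have hM2 : 4 * (d : ℝ) / ε ≤ (M : ℝ) ^ 2 := by
    have h0 : (0 : ℝ) ≤ 4 * d / ε := by positivity
    nlinarith [Real.sq_sqrt h0, Real.sqrt_nonneg (4 * d / ε)]
  set φ : Pt d → (Fin d → ℤ) := fun x i => ⌊(M : ℝ) * x i / ‖x‖⌋ with hφ
  set G : Finset (Fin d → ℤ) := Fintype.piFinset (fun _ => Finset.Icc (-(M : ℤ)) (M : ℤ)) with hG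
  set cone : Pt d → (Fin d → ℤ) → Finset (Pt d) :=
    fun u g => P.filter (fun v => v ≠ u ∧ φ (v - u) = g) with hcone
  set sel : Pt d → (Fin d → ℤ) → Finset (Pt d × Pt d) := fun u g =>
    if h : (cone u g).Nonempty then
      {(u, Classical.choose (Finset.exists_min_image (cone u g) (fun v => ‖v - u‖) h))}
    else ∅ with hsel
  set E : Finset (Pt d × Pt d) := P.biUnion (fun u => G.biUnion (fun g => sel u g)) with hEdef
  -- membership characterization of sel
  have hselmem : ∀ u g e, e ∈ sel u g →
      ∃ x, e = (u, x) ∧ x ∈ cone u g ∧ ∀ v ∈ cone u g, ‖x - u‖ ≤ ‖v - u‖ := by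
    intro u g e he
    rw [hsel] at he
    dsimp only at he
    by_cases h : (cone u g).Nonempty
    · rw [dif_pos h, Finset.mem_singleton] at he
      obtain ⟨hmem, hmin⟩ := Classical.choose_spec (Finset.exists_min_image (cone u g)
        (fun v => ‖v - u‖) h)
      exact ⟨_, he, hmem, hmin⟩
    · rw [dif_neg h] at he
      exact absurd he (Finset.notMem_empty e)
  have hEP : ∀ e ∈ E, e.1 ∈ P ∧ e.2 ∈ P := by
    intro e he
    rw [hEdef, Finset.mem_biUnion] at he
    obtain ⟨u, hu, he⟩ := he
    rw [Finset.mem_biUnion] at he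
    obtain ⟨g, _, he⟩ := he
    obtain ⟨x, rfl, hx, _⟩ := hselmem u g e he
    have : x ∈ P := (Finset.mem_filter.1 hx).1
    exact ⟨hu, this⟩
  -- cardinality bound
  have hselcard : ∀ u g, (sel u g).card ≤ 1 := by
    intro u g
    rw [hsel]
    dsimp only
    split_ifs
    · simp
    · simp
  have hGcard : G.card = (2 * M + 1) ^ d := by
    rw [hG, Fintype.card_piFinset]
    have hIcc : (Finset.Icc (-(M : ℤ)) (M : ℤ)).card = 2 * M + 1 := by
      rw [Int.card_Icc]
      omega
    simp [hIcc]
  have hEcard : E.card ≤ P.card * (2 * M + 1) ^ d := by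
    calc E.card ≤ ∑ u ∈ P, (G.biUnion (fun g => sel u g)).card := Finset.card_biUnion_le
      _ ≤ ∑ u ∈ P, ∑ g ∈ G, (sel u g).card :=
          Finset.sum_le_sum (fun u _ => Finset.card_biUnion_le)
      _ ≤ ∑ u ∈ P, ∑ g ∈ G, 1 :=
          Finset.sum_le_sum (fun u _ => Finset.sum_le_sum (fun g _ => hselcard u g))
      _ = P.card * G.card := by simp [mul_comm]
      _ = P.card * (2 * M + 1) ^ d := by rw [hGcard]
  have hsqε : (0 : ℝ) < Real.sqrt ε := Real.sqrt_pos.2 hε0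
  have hsqε1 : Real.sqrt ε ≤ 1 := by
    rw [show (1:ℝ) = Real.sqrt 1 by rw [Real.sqrt_one]]
    exact Real.sqrt_le_sqrt hε1.le
  have hsqrt4 : Real.sqrt (4 * d / ε) = 2 * Real.sqrt d / Real.sqrt ε := by
    rw [Real.sqrt_div (by positivity) ε]
    congr 1
    rw [show (4 : ℝ) * d = 2 ^ 2 * d by norm_num, Real.sqrt_mul (by positivity),
      Real.sqrt_sq (by norm_num : (0:ℝ) ≤ 2)]
  have key2 : ((2 * M + 1 : ℕ) : ℝ) ≤ (4 * Real.sqrt d + 3) / Real.sqrt ε := by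
    have hceil : (M : ℝ) < Real.sqrt (4 * d / ε) + 1 :=
      Nat.ceil_lt_add_one (Real.sqrt_nonneg _)
    have h1 : ((2 * M + 1 : ℕ) : ℝ) ≤ 2 * (2 * Real.sqrt d / Real.sqrt ε) + 3 := by
      push_cast
      rw [hsqrt4] at hceil
      linarith
    have h2 : 2 * (2 * Real.sqrt d / Real.sqrt ε) + 3 ≤ (4 * Real.sqrt d + 3) / Real.sqrt ε := by
      rw [le_div_iff₀ hsqε]
      have hd0 : (0:ℝ) ≤ Real.sqrt d := Real.sqrt_nonneg _
      field_simp
      nlinarith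
    linarith
  have hrpow : ((4 * Real.sqrt d + 3) / Real.sqrt ε) ^ d
      = (4 * Real.sqrt d + 3) ^ d * ε ^ (-(d : ℝ) / 2) := by
    have hsε : (Real.sqrt ε) ^ d = ε ^ ((d : ℝ) / 2) := by
      rw [Real.sqrt_eq_rpow, ← Real.rpow_natCast (ε ^ ((1:ℝ)/2)) d, ← Real.rpow_mul hε0.le]
      congr 1
      ring
    rw [div_pow, div_eq_mul_inv, hsε, ← Real.rpow_neg hε0.le]
    rw [neg_div]
  have hcardR : (E.card : ℝ) ≤ (4 * Real.sqrt d + 3) ^ d * P.card * ε ^ (-(d : ℝ) / 2) := by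
    have h1 : (E.card : ℝ) ≤ (P.card : ℝ) * ((2 * M + 1 : ℕ) : ℝ) ^ d := by
      have := (Nat.cast_le (α := ℝ)).2 hEcard
      push_cast at this ⊢
      exact this
    have h2 : ((2 * M + 1 : ℕ) : ℝ) ^ d ≤ ((4 * Real.sqrt d + 3) / Real.sqrt ε) ^ d :=
      pow_le_pow_left₀ (by positivity) key2 d
    calc (E.card : ℝ) ≤ (P.card : ℝ) * ((2 * M + 1 : ℕ) : ℝ) ^ d := h1
      _ ≤ (P.card : ℝ) * ((4 * Real.sqrt d + 3) / Real.sqrt ε) ^ d :=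
          mul_le_mul_of_nonneg_left h2 (Nat.cast_nonneg _)
      _ = (4 * Real.sqrt d + 3) ^ d * P.card * ε ^ (-(d : ℝ) / 2) := by
          rw [hrpow]; ring
  -- covering property
  have hM0ofd : 0 < d → 0 < M := by
    intro hd
    have h44 : (4:ℝ) ≤ 4 * d / ε := by
      rw [le_div_iff₀ hε0]
      have h1d : (1:ℝ) ≤ (d:ℝ) := by exact_mod_cast hd
      nlinarith
    have h4 : (2:ℝ) ≤ Real.sqrt (4 * d / ε) := by
      calc (2:ℝ) = Real.sqrt 4 := by
            rw [show (4:ℝ) = 2 ^ 2 by norm_num, Real.sqrt_sq (by norm_num : (0:ℝ) ≤ 2)]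
        _ ≤ _ := Real.sqrt_le_sqrt h44
    have hM1 : (1:ℝ) ≤ (M:ℝ) := by linarith [hMge]
    have : 1 ≤ M := by exact_mod_cast hM1
    omega
  have hcov : ∀ u ∈ P, ∀ v ∈ P, v ≠ u → ∃ x, x ∈ P ∧ x ≠ u ∧
      (u, x) ∈ (↑E : Set (Pt d × Pt d)) ∧ ‖x - u‖ ≤ ‖v - u‖ ∧
      (1 - ε/8) * (‖v - u‖ * ‖x - u‖) ≤ (inner ℝ (v - u) (x - u) : ℝ) := by
    intro u hu v hv hvu
    have hx0 : v - u ≠ 0 := sub_ne_zero.2 hvu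
    have hd : 0 < d := (exists_coord_ne hx0).elim (fun i _ => i.pos)
    have hM0 : 0 < M := hM0ofd hd
    have hnorm : (0:ℝ) < ‖v - u‖ := norm_pos_iff.2 hx0
    have hgG : φ (v - u) ∈ G := by
      rw [hG, Fintype.mem_piFinset]
      intro i
      rw [Finset.mem_Icc]
      have habs := abs_coord_le_norm (v - u) i
      have habs1 := (abs_le.1 habs).1
      have habs2 := (abs_le.1 habs).2
      have hMr : (0:ℝ) ≤ (M:ℝ) := Nat.cast_nonneg M
      constructor
      · rw [hφ]
        dsimp only
        rw [Int.le_floor]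
        push_cast
        rw [le_div_iff₀ hnorm]
        nlinarith
      · rw [hφ]
        dsimp only
        have hfl : ⌊(M:ℝ) * (v - u) i / ‖v - u‖⌋ ≤ ⌊(M:ℝ)⌋ := by
          apply Int.floor_le_floor
          rw [div_le_iff₀ hnorm]
          nlinarith
        simpa using hfl
    have hvc : v ∈ cone u (φ (v - u)) := by
      rw [hcone]
      dsimp only
      rw [Finset.mem_filter]
      exact ⟨hv, hvu, rfl⟩
    have hne : (cone u (φ (v - u))).Nonempty := ⟨v, hvc⟩
    obtain ⟨hxc, hxmin⟩ := Classical.choose_spec (Finset.exists_min_image (cone u (φ (v - u)))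
      (fun y => ‖y - u‖) hne)
    set x := Classical.choose (Finset.exists_min_image (cone u (φ (v - u)))
      (fun y => ‖y - u‖) hne) with hxdef
    have hxfil := hxc
    rw [hcone] at hxfil
    dsimp only at hxfil
    rw [Finset.mem_filter] at hxfil
    obtain ⟨hxP, hxu, hxφ⟩ := hxfil
    have hxE : (u, x) ∈ E := by
      rw [hEdef, Finset.mem_biUnion]
      refine ⟨u, hu, Finset.mem_biUnion.2 ⟨φ (v - u), hgG, ?_⟩⟩
      rw [hsel]
      dsimp only
      rw [dif_pos hne, Finset.mem_singleton]
    have hangle : (1 - ε/8) * (‖v - u‖ * ‖x - u‖) ≤ (inner ℝ (v - u) (x - u) : ℝ) := by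
      apply angle_bound hM0 hε0 hM2 hx0 (sub_ne_zero.2 hxu)
      intro i
      have := congrFun hxφ i
      rw [hφ] at this
      exact this.symm
    exact ⟨x, hxP, hxu, Finset.mem_coe.2 hxE, hxmin v hvc, hangle⟩
  -- assemble
  have hpairs := yao_bound P ε hε0 hε1 (↑E) hcov
  clear hcov hM0ofd hselmem hselcard hGcard hEcard key2 hrpow hsqrt4 hM2 hMge hsqε hsqε1
  clear hMdef hφ hG hcone hsel hEdef
  clear_value M φ G cone sel E
  clear M φ G cone sel
  refine ⟨E, hEP, hcardR, ?_⟩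
  intro a ha b hb
  have haS : a ∈ (↑P : Set (Pt d)) := Finset.mem_coe.2 ha
  have hbS : b ∈ (↑P : Set (Pt d)) := Finset.mem_coe.2 hb
  have e1 : spanDist (↑E) (fun u v => ‖u - v‖ ^ 2) a b
      = sInf (spanSet (↑E) (fun u v => ‖u - v‖ ^ 2) a b) := rfl
  have e2 : edgeSq (↑P) a b = sInf (edgeSet (↑P) a b) := rfl
  obtain ⟨c₀, hc₀mem, hc₀le⟩ := hpairs a ha b hb
  constructor
  · rw [e1, e2]
    apply csInf_le_csInf ⟨0, fun c hc => edgeSet_nonneg hc⟩ ⟨c₀, hc₀mem⟩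
    intro c' hc'
    exact spanSet_subset_edgeSet (fun e heE => hEP e (Finset.mem_coe.1 heE)) haS hc'
  · apply le_of_forall_pos_le_add
    intro η hη
    have hEne : (edgeSet (↑P) a b).Nonempty := ⟨_, single_mem_edgeSet haS hbS⟩
    have hηp : (0:ℝ) < η / (1 + ε) := by positivity
    obtain ⟨c, hc, hclt⟩ := exists_lt_of_csInf_lt hEne
      (lt_add_of_pos_right (sInf (edgeSet (↑P) a b)) hηp)
    obtain ⟨k, p, hp0, hpl, hpmem, hpsum⟩ := hc
    obtain ⟨c', hc'mem, hc'le⟩ := chain_bound hε0 (fun u hu v hv => hpairs u hu v hv) k p hpmem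
    rw [hp0, hpl] at hc'mem
    have h1 : spanDist (↑E) (fun u v => ‖u - v‖ ^ 2) a b ≤ c' := by
      rw [e1]
      exact csInf_le ⟨0, fun c'' hc'' => spanSet_nonneg (fun u v => by positivity) hc''⟩ hc'mem
    have h2 : c' ≤ (1 + ε) * c := by
      rw [hpsum]
      exact hc'le
    have h3 : (1 + ε) * c ≤ (1 + ε) * (edgeSq (↑P) a b + η / (1 + ε)) := by
      apply mul_le_mul_of_nonneg_left _ (by positivity : (0:ℝ) ≤ 1 + ε)
      rw [e2]
      exact hclt.le
    have h4 : (1 + ε) * (edgeSq (↑P) a b + η / (1 + ε)) = (1 + ε) * edgeSq (↑P) a b + η := by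
      rw [mul_add, mul_div_cancel₀ _ (by positivity : (1:ℝ) + ε ≠ 0)]
    linarith only [h1, h2, h3, h4]

/-- For every dimension `d` there is a constant `C = C(d)` such that for every
finite `P ⊆ ℝ^d` with `n` points and every `ε ∈ (0,1)`, there is a set `E` of at most
`C ⬝ n ⬝ ε^{-d/2}` pairs of points of `P` such that the graph `(P, E)` with squared Euclidean
edge weights is a `(1 + ε)`-spanner of the edge-squared metric on `P`. -/
theorem edgeSq_spanner_exists (d : ℕ) :
    ∃ C : ℝ, 0 < C ∧ ∀ (P : Finset (Pt d)) (ε : ℝ), 0 < ε → ε < 1 →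
      ∃ E : Finset (Pt d × Pt d),
        (∀ e ∈ E, e.1 ∈ P ∧ e.2 ∈ P) ∧
        (E.card : ℝ) ≤ C * P.card * ε ^ (-(d : ℝ) / 2) ∧
        ∀ a ∈ P, ∀ b ∈ P,
          edgeSq ↑P a b ≤ spanDist ↑E (fun u v => ‖u - v‖ ^ 2) a b ∧
          spanDist ↑E (fun u v => ‖u - v‖ ^ 2) a b ≤ (1 + ε) * edgeSq ↑P a b := by
  refine ⟨(4 * Real.sqrt d + 3) ^ d, by positivity, ?_⟩
  intro P ε hε0 hε1
  exact edgeSq_spanner_core d P ε hε0 hε1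
end
end

section
/- Fix c ≥ 0. There exist δ₀ > 0 and a constant K > 0 (depending only on c) such that the following holds for all δ ∈ (0, δ₀) and every finite P ⊂ ℝ^d: if E is a set of unordered pairs of points of P such that for every s, t ∈ P with s ≠ t there exists a pair {a, b} ∈ E with ‖s − a‖ ≤ 2δ·‖a − b‖, ‖t − b‖ ≤ 2δ·‖a − b‖, and ‖a − b‖ ≤ (1 + cδ²)·‖s − t‖, then the graph (P, E) with edge weights ‖u − v‖² is a (1 + Kδ²)-spanner of the edge-squared metric on P: for all s, t ∈ P, d₂(s,t) ≤ d_E(s,t) ≤ (1 + Kδ²)·d₂(s,t), where d_E is the shortest-path distance in (P, E). -/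
open scoped BigOperators
open MeasureTheory

noncomputable section

section Chains
variable {α : Type*} (R : α → α → Prop) (w : α → α → ℝ)

def chainSet (a b : α) : Set ℝ :=
  {c : ℝ | ∃ (k : ℕ) (q : Fin (k + 1) → α), q 0 = a ∧ q (Fin.last k) = b ∧
    (∀ i : Fin k, R (q i.castSucc) (q i.succ)) ∧
    c = ∑ i : Fin k, w (q i.castSucc) (q i.succ)}

variable {R w}

lemma chainSet_nil (a : α) : (0 : ℝ) ∈ chainSet R w a a :=
  ⟨0, fun _ => a, rfl, rfl, fun i => i.elim0, by simp⟩

lemma chainSet_snoc {a b : α} {x : ℝ} (hx : x ∈ chainSet R w a b) {c : α} (h : R b c) :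
    x + w b c ∈ chainSet R w a c := by
  obtain ⟨k, q, h0, hl, hR, hs⟩ := hx
  refine ⟨k + 1, Fin.snoc q c, ?_, by simp, ?_, ?_⟩
  · show (Fin.snoc q c : Fin (k+2) → α) ((0 : Fin (k+1)).castSucc) = a
    rw [Fin.snoc_castSucc, h0]
  · intro i
    induction i using Fin.lastCases with
    | last =>
        simp only [Fin.succ_last, Fin.snoc_last, Fin.snoc_castSucc, hl]
        exact h
    | cast j =>
        simp only [Fin.succ_castSucc, Fin.snoc_castSucc]
        exact hR j
  · rw [Fin.sum_univ_castSucc]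
    simp only [Fin.succ_castSucc, Fin.snoc_castSucc, Fin.succ_last, Fin.snoc_last]
    rw [hs, hl]

lemma chainSet_single {a b : α} (h : R a b) : w a b ∈ chainSet R w a b := by
  simpa using chainSet_snoc (chainSet_nil a) h

lemma chainSet_concat {a b c : α} {x y : ℝ} (hx : x ∈ chainSet R w a b)
    (hy : y ∈ chainSet R w b c) : x + y ∈ chainSet R w a c := by
  obtain ⟨k, q, h0, hl, hR, hs⟩ := hy
  subst hs; subst hl
  induction k with
  | zero => simpa [h0 ▸ hx] using hx
  | succ k IH =>
      have hR' : ∀ i : Fin k, R ((q ∘ Fin.castSucc) i.castSucc) ((q ∘ Fin.castSucc) i.succ) := by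
        intro i
        simp only [Function.comp, Fin.succ_castSucc]
        exact hR i.castSucc
      have h0' : (q ∘ Fin.castSucc) 0 = b := by simpa using h0
      have step := chainSet_snoc (IH (q ∘ Fin.castSucc) h0' hR') (hR (Fin.last k))
      rw [Fin.sum_univ_castSucc, Fin.succ_last, ← add_assoc]
      have hsum : ∑ i : Fin k, w (q i.castSucc.castSucc) (q i.castSucc.succ)
          = ∑ i : Fin k, w ((q ∘ Fin.castSucc) i.castSucc) ((q ∘ Fin.castSucc) i.succ) := by
        refine Finset.sum_congr rfl fun i _ => ?_
        simp [Function.comp]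
      rw [hsum]
      exact step

lemma chainSet_chain : ∀ (k : ℕ) (p : Fin (k + 1) → α) (B : Fin k → ℝ),
    (∀ i : Fin k, ∃ x ∈ chainSet R w (p i.castSucc) (p i.succ), x ≤ B i) →
    ∃ x ∈ chainSet R w (p 0) (p (Fin.last k)), x ≤ ∑ i : Fin k, B i := by
  intro k
  induction k with
  | zero => exact fun p B _ => ⟨0, chainSet_nil _, by simp⟩
  | succ k IH =>
      intro p B h
      obtain ⟨x, hx, hxB⟩ := IH (p ∘ Fin.castSucc) (B ∘ Fin.castSucc) (fun i => by
        simpa [Function.comp] using h i.castSucc)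
      obtain ⟨y, hy, hyB⟩ := h (Fin.last k)
      have h1 : (p ∘ Fin.castSucc) (Fin.last k) = p (Fin.last k).castSucc := rfl
      rw [h1] at hx
      have h0 : (p ∘ Fin.castSucc) 0 = p 0 := by simp
      rw [h0] at hx
      refine ⟨x + y, ?_, ?_⟩
      · have := chainSet_concat hx hy
        rwa [Fin.succ_last] at this
      · rw [Fin.sum_univ_castSucc]
        have : ∑ i : Fin k, (B ∘ Fin.castSucc) i = ∑ i : Fin k, B i.castSucc := rfl
        calc x + y ≤ (∑ i : Fin k, B i.castSucc) + B (Fin.last k) := by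
              refine add_le_add ?_ hyB
              simpa [Function.comp] using hxB
          _ = _ := rfl

lemma chainSet_nonneg (hw : ∀ a b : α, 0 ≤ w a b) {a b : α} {x : ℝ}
    (hx : x ∈ chainSet R w a b) : 0 ≤ x := by
  obtain ⟨k, q, -, -, -, hs⟩ := hx
  exact hs ▸ Finset.sum_nonneg fun i _ => hw _ _

end Chains

lemma keyineq {c e : ℝ} (hc : 0 ≤ c) (he : 0 ≤ e) (h : (3*c+64) * e ≤ 1) :
    (1 + 8*e*(1 + (3*c+64)*e)) * (1 + c*e)^2 ≤ 1 + (3*c+64)*e := by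
  have hu : c*e ≤ 1 := by nlinarith
  have hu0 : 0 ≤ c*e := mul_nonneg hc he
  nlinarith [mul_nonneg he hu0, mul_nonneg hu0 hu0, mul_nonneg he (mul_nonneg hu0 hu0),
    mul_nonneg (mul_nonneg he hu0) hu0, sq_nonneg (c*e), mul_nonneg he he,
    mul_le_one₀ hu hu0 hu, h, he, hu]

lemma key {d : ℕ} {P : Set (Pt d)} (hP : P.Finite) {E : Set (Pt d × Pt d)}
    (hE : ∀ e ∈ E, e.1 ∈ P ∧ e.2 ∈ P) {c δ : ℝ} (hc : 0 ≤ c) (hδ : 0 < δ)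
    (hδ4 : 4 * δ < 1) (hK1 : (3*c+64) * δ^2 ≤ 1)
    (hserve : ∀ s ∈ P, ∀ t ∈ P, s ≠ t → ∃ a b : Pt d, (a, b) ∈ E ∧
      ‖s - a‖ ≤ 2 * δ * ‖a - b‖ ∧ ‖t - b‖ ≤ 2 * δ * ‖a - b‖ ∧
      ‖a - b‖ ≤ (1 + c * δ ^ 2) * ‖s - t‖) :
    ∀ n : ℕ, ∀ s ∈ P, ∀ t ∈ P,
      ((Finset.image (fun pq : Pt d × Pt d => ‖pq.1 - pq.2‖)
          (hP.toFinset ×ˢ hP.toFinset)).filter (fun r => r < ‖s - t‖)).card ≤ n →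
      ∃ x ∈ chainSet (fun u v : Pt d => (u, v) ∈ E ∨ (v, u) ∈ E)
          (fun u v => ‖u - v‖ ^ 2) s t,
        x ≤ (1 + (3*c+64) * δ^2) * ‖s - t‖^2 := by
  have hce : c * δ^2 ≤ 1 := by nlinarith [sq_nonneg δ]
  set D := (Finset.image (fun pq : Pt d × Pt d => ‖pq.1 - pq.2‖)
    (hP.toFinset ×ˢ hP.toFinset)) with hD
  have hmemD : ∀ x ∈ P, ∀ y ∈ P, ‖x - y‖ ∈ D := by
    intro x hx y hy
    exact Finset.mem_image.mpr ⟨(x, y),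
      Finset.mem_product.mpr ⟨hP.mem_toFinset.mpr hx, hP.mem_toFinset.mpr hy⟩, rfl⟩
  intro n
  induction n with
  | zero =>
      intro s hs t ht hcard
      by_cases hst : s = t
      · subst hst; exact ⟨0, chainSet_nil s, by positivity⟩
      · exfalso
        obtain ⟨a, b, habE, h1, h2, h3⟩ := hserve s hs t ht hst
        have ha : a ∈ P := (hE _ habE).1
        have hst0 : 0 < ‖s - t‖ := norm_pos_iff.mpr (sub_ne_zero.mpr hst)
        have hsa_lt : ‖s - a‖ < ‖s - t‖ := by
          nlinarith [h1, mul_le_mul_of_nonneg_left h3 (by positivity : (0:ℝ) ≤ 2*δ),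
            mul_nonneg (mul_nonneg (by linarith : (0:ℝ) ≤ 2*δ) hst0.le)
              (by linarith : (0:ℝ) ≤ 1 - c*δ^2),
            mul_pos hst0 (by linarith : (0:ℝ) < 1 - 4*δ)]
        have : 0 < (D.filter (fun r => r < ‖s - t‖)).card :=
          Finset.card_pos.mpr ⟨‖s - a‖, Finset.mem_filter.mpr ⟨hmemD s hs a ha, hsa_lt⟩⟩
        omega
  | succ n IH =>
      intro s hs t ht hcard
      by_cases hst : s = t
      · subst hst; exact ⟨0, chainSet_nil s, by positivity⟩
      obtain ⟨a, b, habE, h1, h2, h3⟩ := hserve s hs t ht hst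
      have ha : a ∈ P := (hE _ habE).1
      have hb : b ∈ P := (hE _ habE).2
      have hst0 : 0 < ‖s - t‖ := norm_pos_iff.mpr (sub_ne_zero.mpr hst)
      have hsa_lt : ‖s - a‖ < ‖s - t‖ := by
        nlinarith [h1, mul_le_mul_of_nonneg_left h3 (by positivity : (0:ℝ) ≤ 2*δ),
          mul_nonneg (mul_nonneg (by linarith : (0:ℝ) ≤ 2*δ) hst0.le)
            (by linarith : (0:ℝ) ≤ 1 - c*δ^2),
          mul_pos hst0 (by linarith : (0:ℝ) < 1 - 4*δ)]
      have hbt_lt : ‖b - t‖ < ‖s - t‖ := by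
        rw [norm_sub_rev]
        nlinarith [h2, mul_le_mul_of_nonneg_left h3 (by positivity : (0:ℝ) ≤ 2*δ),
          mul_nonneg (mul_nonneg (by linarith : (0:ℝ) ≤ 2*δ) hst0.le)
            (by linarith : (0:ℝ) ≤ 1 - c*δ^2),
          mul_pos hst0 (by linarith : (0:ℝ) < 1 - 4*δ)]
      have hcard' : ∀ u ∈ P, ∀ v ∈ P, ‖u - v‖ < ‖s - t‖ →
          (D.filter (fun r => r < ‖u - v‖)).card ≤ n := by
        intro u hu v hv huv
        have hsub : D.filter (fun r => r < ‖u - v‖) ⊆ D.filter (fun r => r < ‖s - t‖) := by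
          intro r hr
          rw [Finset.mem_filter] at hr ⊢
          exact ⟨hr.1, hr.2.trans huv⟩
        have hss : D.filter (fun r => r < ‖u - v‖) ⊂ D.filter (fun r => r < ‖s - t‖) :=
          (Finset.ssubset_iff_of_subset hsub).mpr
            ⟨‖u - v‖, Finset.mem_filter.mpr ⟨hmemD u hu v hv, huv⟩, by simp⟩
        have := Finset.card_lt_card hss
        omega
      obtain ⟨x₁, hx₁, hx₁B⟩ := IH s hs a ha (hcard' s hs a ha hsa_lt)
      obtain ⟨x₂, hx₂, hx₂B⟩ := IH b hb t ht (hcard' b hb t ht hbt_lt)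
      have hxe : ‖a - b‖^2 ∈ chainSet (fun u v : Pt d => (u, v) ∈ E ∨ (v, u) ∈ E)
          (fun u v => ‖u - v‖ ^ 2) a b := chainSet_single (Or.inl habE)
      have total := chainSet_concat (chainSet_concat hx₁ hxe) hx₂
      refine ⟨(x₁ + ‖a - b‖^2) + x₂, total, ?_⟩
      have f1 : (0:ℝ) ≤ 1 + (3*c+64)*δ^2 := by positivity
      have hab2S : ‖a - b‖^2 ≤ (1 + c*δ^2)^2 * ‖s - t‖^2 := by
        have h := pow_le_pow_left₀ (norm_nonneg (a - b)) h3 2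
        calc ‖a - b‖^2 ≤ ((1 + c*δ^2) * ‖s - t‖)^2 := h
          _ = (1 + c*δ^2)^2 * ‖s - t‖^2 := by ring
      have hsa2 : ‖s - a‖^2 ≤ 4*δ^2*‖a - b‖^2 := by
        have h := pow_le_pow_left₀ (norm_nonneg (s - a)) h1 2
        calc ‖s - a‖^2 ≤ (2*δ*‖a - b‖)^2 := h
          _ = 4*δ^2*‖a - b‖^2 := by ring
      have hbt2 : ‖b - t‖^2 ≤ 4*δ^2*‖a - b‖^2 := by
        rw [norm_sub_rev]
        have h := pow_le_pow_left₀ (norm_nonneg (t - b)) h2 2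
        calc ‖t - b‖^2 ≤ (2*δ*‖a - b‖)^2 := h
          _ = 4*δ^2*‖a - b‖^2 := by ring
      have t3 : x₁ + x₂ ≤ (1 + (3*c+64)*δ^2) * (8*δ^2*‖a - b‖^2) := by
        nlinarith [hx₁B, hx₂B, hsa2, hbt2, f1]
      have t5 : (1 + 8*δ^2*(1 + (3*c+64)*δ^2)) * ‖a - b‖^2 ≤
          (1 + 8*δ^2*(1 + (3*c+64)*δ^2)) * ((1 + c*δ^2)^2 * ‖s - t‖^2) :=
        mul_le_mul_of_nonneg_left hab2S (by positivity)
      have t7 := mul_le_mul_of_nonneg_right (keyineq hc (sq_nonneg δ) hK1)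
        (sq_nonneg ‖s - t‖)
      nlinarith [t3, t5, t7]

/-- Fix `c ≥ 0`. There exist `δ₀ > 0` and `K > 0` (depending only on `c`)
such that for all `δ ∈ (0, δ₀)` and every finite `P ⊆ ℝ^d`: if `E` is a set of pairs of points
of `P` such that every pair `s ≠ t` in `P` is served by some edge `{a, b} ∈ E` with
`‖s - a‖ ≤ 2δ‖a - b‖`, `‖t - b‖ ≤ 2δ‖a - b‖` and `‖a - b‖ ≤ (1 + cδ²)‖s - t‖`, then the graph
`(P, E)` with squared Euclidean edge weights is a `(1 + Kδ²)`-spanner of the edge-squared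
metric on `P`. -/
theorem wspd_gives_edgeSq_spanner (c : ℝ) (hc : 0 ≤ c) :
    ∃ δ₀ > (0 : ℝ), ∃ K > (0 : ℝ), ∀ δ : ℝ, 0 < δ → δ < δ₀ →
      ∀ (d : ℕ) (P : Set (Pt d)), P.Finite →
        ∀ E : Set (Pt d × Pt d), (∀ e ∈ E, e.1 ∈ P ∧ e.2 ∈ P) →
          (∀ s ∈ P, ∀ t ∈ P, s ≠ t → ∃ a b : Pt d, (a, b) ∈ E ∧
            ‖s - a‖ ≤ 2 * δ * ‖a - b‖ ∧ ‖t - b‖ ≤ 2 * δ * ‖a - b‖ ∧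
            ‖a - b‖ ≤ (1 + c * δ ^ 2) * ‖s - t‖) →
          ∀ s ∈ P, ∀ t ∈ P,
            edgeSq P s t ≤ spanDist E (fun u v => ‖u - v‖ ^ 2) s t ∧
            spanDist E (fun u v => ‖u - v‖ ^ 2) s t ≤ (1 + K * δ ^ 2) * edgeSq P s t := by
  refine ⟨(3*c+64+1)⁻¹, by positivity, 3*c+64, by positivity, ?_⟩
  intro δ hδ hδ₀ d P hP E hE hserve s hs t ht
  have hδ1 : δ * (3*c+64+1) < 1 := by
    have hδ₀' : δ < 1/(3*c+64+1) := by rwa [one_div]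
    exact (lt_div_iff₀ (by positivity)).mp hδ₀'
  have hδ4 : 4 * δ < 1 := by nlinarith
  have hK1 : (3*c+64) * δ^2 ≤ 1 := by nlinarith [mul_lt_mul_of_pos_left hδ1 hδ]
  have spanBound : ∀ u ∈ P, ∀ v ∈ P,
      ∃ x ∈ chainSet (fun u v : Pt d => (u, v) ∈ E ∨ (v, u) ∈ E)
        (fun u v => ‖u - v‖ ^ 2) u v, x ≤ (1 + (3*c+64) * δ^2) * ‖u - v‖^2 :=
    fun u hu v hv => key hP hE hc hδ hδ4 hK1 hserve _ u hu v hv (Finset.card_filter_le _ _)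
  set Rel : Pt d → Pt d → Prop := fun u v => (u, v) ∈ E ∨ (v, u) ∈ E with hRel
  set w : Pt d → Pt d → ℝ := fun u v => ‖u - v‖ ^ 2 with hw
  set Aset : Set ℝ := {c : ℝ | ∃ (k : ℕ) (p : Fin (k + 1) → Pt d), p 0 = s ∧
    p (Fin.last k) = t ∧ (∀ i, p i ∈ P) ∧
    c = ∑ i : Fin k, ‖p i.succ - p i.castSucc‖ ^ 2} with hAset
  have hes : edgeSq P s t = sInf Aset := rfl
  have hsp : spanDist E w s t = sInf (chainSet Rel w s t) := rfl
  have hpos : (0:ℝ) < 1 + (3*c+64) * δ^2 := by positivity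
  have hAbdd : BddBelow Aset := by
    refine ⟨0, fun y hy => ?_⟩
    obtain ⟨k, p, -, -, -, hy⟩ := hy
    exact hy ▸ Finset.sum_nonneg fun i _ => by positivity
  have hBbdd : BddBelow (chainSet Rel w s t) := by
    refine ⟨0, fun y hy => chainSet_nonneg (fun a b => ?_) hy⟩
    positivity
  obtain ⟨x₀, hx₀, -⟩ := spanBound s hs t ht
  have hBsub : chainSet Rel w s t ⊆ Aset := by
    rintro y ⟨k, q, h0, hl, hR, hy⟩
    refine ⟨k, q, h0, hl, ?_, ?_⟩
    · intro i
      induction i using Fin.cases with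
      | zero => exact h0 ▸ hs
      | succ j =>
          rcases hR j with h | h
          · exact (hE _ h).2
          · exact (hE _ h).1
    · rw [hy]
      exact Finset.sum_congr rfl fun i _ => by rw [norm_sub_rev]
  constructor
  · rw [hes, hsp]
    exact csInf_le_csInf hAbdd ⟨x₀, hx₀⟩ hBsub
  · have hAne : Aset.Nonempty := by
      refine ⟨_, 1, fun i => if i = 0 then s else t, if_pos rfl, ?_, ?_, rfl⟩
      · norm_num
      · intro i
        fin_cases i <;> simp [hs, ht]
    have hstep : ∀ y ∈ Aset, spanDist E w s t ≤ (1 + (3*c+64) * δ^2) * y := by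
      rintro y ⟨k, p, h0, hl, hmem, hy⟩
      obtain ⟨x, hx, hxB⟩ := chainSet_chain k p
        (fun i => (1 + (3*c+64) * δ^2) * ‖p i.castSucc - p i.succ‖^2)
        (fun i => spanBound (p i.castSucc) (hmem _) (p i.succ) (hmem _))
      rw [h0, hl] at hx
      have h1 : spanDist E w s t ≤ x := hsp ▸ csInf_le hBbdd hx
      have hsum : ∑ i : Fin k, (1 + (3*c+64) * δ^2) * ‖p i.castSucc - p i.succ‖^2
          = (1 + (3*c+64) * δ^2) * y := by
        rw [hy, Finset.mul_sum]
        exact Finset.sum_congr rfl fun i _ => by rw [norm_sub_rev]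
      rw [hsum] at hxB
      exact h1.trans hxB
    have hdiv : spanDist E w s t / (1 + (3*c+64) * δ^2) ≤ sInf Aset :=
      le_csInf hAne fun y hy => (div_le_iff₀ hpos).mpr (by rw [mul_comm]; exact hstep y hy)
    rw [hes]
    have := (div_le_iff₀ hpos).mp hdiv
    linarith [this, mul_comm (sInf Aset) (1 + (3*c+64) * δ^2)]
end
end
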